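/- arXiv:2106.05638 — 9 statements merged into one kernel-verified Lean document; each statement's English description precedes it below -/
import Mathlib

section
/- Let T be a rooted tree with n nodes and let c be a natural number. Suppose a finite set of chips is given, each chip associated with a leaf of T, and each chip is placed on a node lying on the path from the root to its associated leaf, such that every root-to-leaf path contains at most c chips. Then the sum over all chips of the distance from the chip's node to its associated leaf is at most c(n-1). -/
open Classical

lemma between_card {V : Type*} [Fintype V] [DecidableEq V]
    (G : SimpleGraph V) (hT : G.IsTree) (a b : V) :
    (Finset.univ.filter (fun w => G.dist a w + G.dist w b = G.dist a b)).card
      = G.dist a b + 1 := by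
  have hc := hT.isConnected
  obtain ⟨p, hlen⟩ := hc.exists_walk_length_eq_dist a b
  have hp : p.IsPath := p.isPath_of_length_eq_dist hlen
  have hset : (Finset.univ.filter (fun w => G.dist a w + G.dist w b = G.dist a b))
      = p.support.toFinset := by
    ext w
    simp only [Finset.mem_filter, Finset.mem_univ, true_and, List.mem_toFinset]
    constructor
    · intro hw
      obtain ⟨q1, hq1⟩ := hc.exists_walk_length_eq_dist a w
      obtain ⟨q2, hq2⟩ := hc.exists_walk_length_eq_dist w b
      have hlen2 : (q1.append q2).length = G.dist a b := by
        rw [SimpleGraph.Walk.length_append, hq1, hq2, hw]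
      have hpath2 := (q1.append q2).isPath_of_length_eq_dist hlen2
      have := (hT.existsUnique_path a b).unique hpath2 hp
      have : w ∈ (q1.append q2).support := by
        rw [SimpleGraph.Walk.mem_support_append_iff]
        exact Or.inl q1.end_mem_support
      rwa [‹q1.append q2 = p›] at this
    · intro hw
      have h1 : G.dist a w ≤ (p.takeUntil w hw).length := SimpleGraph.dist_le _
      have h2 : G.dist w b ≤ (p.dropUntil w hw).length := SimpleGraph.dist_le _
      have h3 : (p.takeUntil w hw).length + (p.dropUntil w hw).length = p.length := by
        rw [← SimpleGraph.Walk.length_append, p.take_spec hw]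
      have h4 : G.dist a b ≤ G.dist a w + G.dist w b := hc.dist_triangle
      omega
  rw [hset, List.toFinset_card_of_nodup hp.support_nodup,
    SimpleGraph.Walk.length_support, hlen]

/-- Chips on a rooted tree: each chip `i` sits at `pos i`, a node on the path from
`root` to its associated leaf `leafOf i`; if every root-to-leaf path carries at most
`c` chips, then the total chip-to-leaf distance is at most `c(n-1)`. -/
theorem stmt0 {V : Type*} [Fintype V] [DecidableEq V]
    (G : SimpleGraph V) [DecidableRel G.Adj] (hT : G.IsTree) (root : V)
    (c : ℕ) {ι : Type*} [Fintype ι] (leafOf pos : ι → V)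
    (hleaf : ∀ i, G.degree (leafOf i) ≤ 1)
    (hpath : ∀ i, G.dist root (leafOf i) = G.dist root (pos i) + G.dist (pos i) (leafOf i))
    (hcap : ∀ v : V, G.degree v ≤ 1 →
      (Finset.univ.filter
        (fun i => G.dist root v = G.dist root (pos i) + G.dist (pos i) v)).card ≤ c) :
    ∑ i, G.dist (pos i) (leafOf i) ≤ c * (Fintype.card V - 1) := by
  have hc := hT.isConnected
  set Q : ι → V → Prop := fun i w =>
    G.dist (pos i) w + G.dist w (leafOf i) = G.dist (pos i) (leafOf i) ∧ w ≠ pos i with hQ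
  -- Step 1: per-chip count
  have step1 : ∀ i, (Finset.univ.filter (Q i)).card = G.dist (pos i) (leafOf i) := by
    intro i
    have : Finset.univ.filter (Q i)
        = (Finset.univ.filter (fun w =>
            G.dist (pos i) w + G.dist w (leafOf i) = G.dist (pos i) (leafOf i))).erase (pos i) := by
      ext w
      simp only [hQ, Finset.mem_filter, Finset.mem_univ, true_and, Finset.mem_erase]
      tauto
    rw [this, Finset.card_erase_of_mem, between_card G hT]
    · simp
    · simp
  -- Step 2: double counting
  have step2 : ∑ i, G.dist (pos i) (leafOf i)
      = ∑ w : V, (Finset.univ.filter (fun i => Q i w)).card := by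
    simp_rw [← step1, Finset.card_filter]
    exact Finset.sum_comm
  rw [step2]
  -- Step 3: per-vertex bounds
  have hroot : (Finset.univ.filter (fun i => Q i root)).card = 0 := by
    rw [Finset.card_eq_zero, Finset.filter_eq_empty_iff]
    rintro i - ⟨hb, hne⟩
    have h1 := hpath i
    have h2 : G.dist (pos i) root = G.dist root (pos i) := G.dist_comm ..
    have h3 : G.dist root (pos i) = 0 := by omega
    exact hne (hc.dist_eq_zero_iff.mp h3)
  have hb : ∀ w, (Finset.univ.filter (fun i => Q i w)).card ≤ c := by
    intro w
    rcases (Finset.univ.filter (fun i => Q i w)).eq_empty_or_nonempty with he | ⟨j, hj⟩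
    · simp [he]
    · have hQj : Q j w := (Finset.mem_filter.mp hj).2
      have key : ∀ i, Q i w → G.dist root w = G.dist root (pos i) + G.dist (pos i) w ∧
          G.dist root (leafOf i) = G.dist root w + G.dist w (leafOf i) := by
        rintro i ⟨hbi, -⟩
        have h1 := hpath i
        have h2 : G.dist root w ≤ G.dist root (pos i) + G.dist (pos i) w := hc.dist_triangle
        have h3 : G.dist root (leafOf i) ≤ G.dist root w + G.dist w (leafOf i) :=
          hc.dist_triangle
        omega
      have hkj := (key j hQj).2
      have hsub : Finset.univ.filter (fun i => Q i w) ⊆ Finset.univ.filter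
          (fun i => G.dist root (leafOf j) = G.dist root (pos i) + G.dist (pos i) (leafOf j)) := by
        intro i hi
        have hki := (key i (Finset.mem_filter.mp hi).2).1
        simp only [Finset.mem_filter, Finset.mem_univ, true_and]
        have t1 : G.dist (pos i) (leafOf j) ≤ G.dist (pos i) w + G.dist w (leafOf j) :=
          hc.dist_triangle
        have t2 : G.dist root (leafOf j) ≤ G.dist root (pos i) + G.dist (pos i) (leafOf j) :=
          hc.dist_triangle
        omega
      exact le_trans (Finset.card_le_card hsub) (hcap _ (hleaf j))
  calc ∑ w : V, (Finset.univ.filter (fun i => Q i w)).card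
      = ∑ w ∈ Finset.univ.erase root, (Finset.univ.filter (fun i => Q i w)).card := by
        rw [← Finset.sum_erase_add _ _ (Finset.mem_univ root), hroot, add_zero]
    _ ≤ ∑ w ∈ Finset.univ.erase root, c := Finset.sum_le_sum (fun w _ => hb w)
    _ = c * (Fintype.card V - 1) := by
        rw [Finset.sum_const, Finset.card_erase_of_mem (Finset.mem_univ root),
          Finset.card_univ, smul_eq_mul, mul_comm]
end

section
/- Let S be a finite set of points in the plane with pairwise distinct x-coordinates and pairwise distinct y-coordinates, each colored red or blue. If p ∈ S is contained in a safe axis-aligned box B, then p does not participate in S, i.e., there is no point q ∈ S of the opposite color such that the open axis-aligned rectangle spanned by p and q contains no point of S. -/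
open Classical

noncomputable section

abbrev Pt := ℝ × ℝ

/-- An axis-aligned box in the plane. -/
structure Box where
  x0 : ℝ
  x1 : ℝ
  y0 : ℝ
  y1 : ℝ
  hx : x0 < x1
  hy : y0 < y1

/-- The cross of a box: the union of its vertical and horizontal strips. -/
def Box.cross (B : Box) : Set Pt :=
  {p | (B.x0 ≤ p.1 ∧ p.1 ≤ B.x1) ∨ (B.y0 ≤ p.2 ∧ p.2 ≤ B.y1)}

/-- The four open quadrants of a box. -/
def Box.NE (B : Box) : Set Pt := {p | B.x1 < p.1 ∧ B.y1 < p.2}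
def Box.NW (B : Box) : Set Pt := {p | p.1 < B.x0 ∧ B.y1 < p.2}
def Box.SE (B : Box) : Set Pt := {p | B.x1 < p.1 ∧ p.2 < B.y0}
def Box.SW (B : Box) : Set Pt := {p | p.1 < B.x0 ∧ p.2 < B.y0}

/-- Membership in the open interior of a box. -/
def Box.inside (B : Box) (p : Pt) : Prop :=
  B.x0 < p.1 ∧ p.1 < B.x1 ∧ B.y0 < p.2 ∧ p.2 < B.y1

/-- Membership in the closed box. -/
def Box.memClosed (B : Box) (p : Pt) : Prop :=
  B.x0 ≤ p.1 ∧ p.1 ≤ B.x1 ∧ B.y0 ≤ p.2 ∧ p.2 ≤ B.y1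

/-- `p` avoids the boundary lines of the box and of its quadrants. -/
def Box.offBoundary (B : Box) (p : Pt) : Prop :=
  p.1 ≠ B.x0 ∧ p.1 ≠ B.x1 ∧ p.2 ≠ B.y0 ∧ p.2 ≠ B.y1

/-- Minimal points of `T` towards the SW corner of the NE quadrant
(the usual minimal points under coordinatewise domination). -/
def neMinSet (T : Set Pt) : Set Pt :=
  {p ∈ T | ∀ q ∈ T, (q.1 ≤ p.1 ∧ q.2 ≤ p.2) → q = p}

/-- Minimal points of `T` towards the SE corner of the NW quadrant. -/
def nwMinSet (T : Set Pt) : Set Pt :=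
  {p ∈ T | ∀ q ∈ T, (p.1 ≤ q.1 ∧ q.2 ≤ p.2) → q = p}

/-- Minimal points of `T` towards the NW corner of the SE quadrant. -/
def seMinSet (T : Set Pt) : Set Pt :=
  {p ∈ T | ∀ q ∈ T, (q.1 ≤ p.1 ∧ p.2 ≤ q.2) → q = p}

/-- Minimal points of `T` towards the NE corner of the SW quadrant
(the usual maximal points under coordinatewise domination). -/
def swMinSet (T : Set Pt) : Set Pt :=
  {p ∈ T | ∀ q ∈ T, (p.1 ≤ q.1 ∧ p.2 ≤ q.2) → q = p}

/-- `z` lies in the open axis-aligned rectangle spanned by `p` and `q`. -/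
def openRect (p q z : Pt) : Prop :=
  min p.1 q.1 < z.1 ∧ z.1 < max p.1 q.1 ∧ min p.2 q.2 < z.2 ∧ z.2 < max p.2 q.2

/-- `p` and `q` see each other in `S`: the open rectangle they span is empty of `S`. -/
def sees (S : Set Pt) (p q : Pt) : Prop := ∀ z ∈ S, ¬ openRect p q z

/-- `p` participates in `S`: some point of the opposite color sees `p`. -/
def participates (S : Set Pt) (color : Pt → Bool) (p : Pt) : Prop :=
  ∃ q ∈ S, color q ≠ color p ∧ sees S p q

/-- All points of `S` in the cross of `B` have color `c`. -/
def crossSafeFor (S : Set Pt) (color : Pt → Bool) (c : Bool) (B : Box) : Prop :=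
  ∀ p ∈ S, p ∈ B.cross → color p = c

/-- `B` is `c`-safe for `S`: `c`-cross-safe and the four directional minimal
sets of the quadrants only contain points of color `c`. -/
def safeFor (S : Set Pt) (color : Pt → Bool) (c : Bool) (B : Box) : Prop :=
  crossSafeFor S color c B ∧
  (∀ p ∈ neMinSet (S ∩ B.NE), color p = c) ∧
  (∀ p ∈ nwMinSet (S ∩ B.NW), color p = c) ∧
  (∀ p ∈ seMinSet (S ∩ B.SE), color p = c) ∧
  (∀ p ∈ swMinSet (S ∩ B.SW), color p = c)

/-- `B` is safe: red-safe (`true`) or blue-safe (`false`). -/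
def isSafe (S : Set Pt) (color : Pt → Bool) (B : Box) : Prop :=
  safeFor S color true B ∨ safeFor S color false B

/-- General position: pairwise distinct x-coordinates and y-coordinates. -/
def genPos (S : Set Pt) : Prop :=
  ∀ p ∈ S, ∀ q ∈ S, p ≠ q → p.1 ≠ q.1 ∧ p.2 ≠ q.2

lemma exists_dom_min (a b : ℝ) (ha : a ≠ 0) (hb : b ≠ 0) (T : Finset Pt) (q : Pt) (hq : q ∈ T) :
    ∃ m ∈ T, (a * m.1 ≤ a * q.1 ∧ b * m.2 ≤ b * q.2) ∧
      ∀ r ∈ T, (a * r.1 ≤ a * m.1 ∧ b * r.2 ≤ b * m.2) → r = m := by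
  classical
  set T' := T.filter (fun r => a * r.1 ≤ a * q.1 ∧ b * r.2 ≤ b * q.2) with hT'
  have hq' : q ∈ T' := by simp [hT', hq]
  obtain ⟨m, hm, hmin⟩ := T'.exists_min_image (fun r => a * r.1 + b * r.2) ⟨q, hq'⟩
  rw [hT', Finset.mem_filter] at hm
  refine ⟨m, hm.1, hm.2, ?_⟩
  intro r hr hdom
  have hr' : r ∈ T' := by
    rw [hT', Finset.mem_filter]
    exact ⟨hr, le_trans hdom.1 hm.2.1, le_trans hdom.2 hm.2.2⟩
  have hle := hmin r hr'
  have h1 : a * r.1 = a * m.1 := by linarith [hdom.1, hdom.2]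
  have h2 : b * r.2 = b * m.2 := by linarith [hdom.1, hdom.2]
  exact Prod.ext (mul_left_cancel₀ ha h1) (mul_left_cancel₀ hb h2)

lemma openRect_of (p q m : Pt)
    (hx : (p.1 < m.1 ∧ m.1 < q.1) ∨ (q.1 < m.1 ∧ m.1 < p.1))
    (hy : (p.2 < m.2 ∧ m.2 < q.2) ∨ (q.2 < m.2 ∧ m.2 < p.2)) : openRect p q m := by
  refine ⟨?_, ?_, ?_, ?_⟩
  · rcases hx with h|h
    · exact lt_of_le_of_lt (min_le_left _ _) h.1
    · exact lt_of_le_of_lt (min_le_right _ _) h.1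
  · rcases hx with h|h
    · exact lt_of_lt_of_le h.2 (le_max_right _ _)
    · exact lt_of_lt_of_le h.2 (le_max_left _ _)
  · rcases hy with h|h
    · exact lt_of_le_of_lt (min_le_left _ _) h.1
    · exact lt_of_le_of_lt (min_le_right _ _) h.1
  · rcases hy with h|h
    · exact lt_of_lt_of_le h.2 (le_max_right _ _)
    · exact lt_of_lt_of_le h.2 (le_max_left _ _)

lemma stmt1_aux (S : Finset Pt) (color : Pt → Bool) (hgp : genPos (↑S : Set Pt))
    (B : Box) (p : Pt) (hp : p ∈ S) (hpB : B.inside p)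
    (c : Bool) (hsafe : safeFor (↑S : Set Pt) color c B) :
    ¬ participates (↑S : Set Pt) color p := by
  classical
  rintro ⟨q, hqS, hqc, hsees⟩
  have hqS' : q ∈ S := hqS
  have hpc : color p = c := hsafe.1 p hp (Or.inl ⟨le_of_lt hpB.1, le_of_lt hpB.2.1⟩)
  have hnc : q ∉ B.cross := fun h => hqc (by rw [hsafe.1 q hqS h, hpc])
  have hx : q.1 < B.x0 ∨ B.x1 < q.1 := by
    rcases lt_or_ge q.1 B.x0 with h | h
    · exact Or.inl h
    · rcases le_or_gt q.1 B.x1 with h2 | h2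
      · exact absurd (Or.inl ⟨h, h2⟩) hnc
      · exact Or.inr h2
  have hy : q.2 < B.y0 ∨ B.y1 < q.2 := by
    rcases lt_or_ge q.2 B.y0 with h | h
    · exact Or.inl h
    · rcases le_or_gt q.2 B.y1 with h2 | h2
      · exact absurd (Or.inr ⟨h, h2⟩) hnc
      · exact Or.inr h2
  rcases hx with hx | hx <;> rcases hy with hy | hy
  · -- SW quadrant: q.1 < x0, q.2 < y0; a = -1, b = -1
    have hqQ : q ∈ B.SW := ⟨hx, hy⟩
    obtain ⟨m, hmT, ⟨hmx, hmy⟩, hmin⟩ :=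
      exists_dom_min (-1) (-1) (by norm_num) (by norm_num)
        (S.filter (fun r => r ∈ B.SW)) q (Finset.mem_filter.mpr ⟨hqS', hqQ⟩)
    rw [Finset.mem_filter] at hmT
    obtain ⟨hmS, hmQ⟩ := hmT
    have hmx' : q.1 ≤ m.1 := by linarith
    have hmy' : q.2 ≤ m.2 := by linarith
    have hmMin : m ∈ swMinSet ((↑S : Set Pt) ∩ B.SW) := by
      refine ⟨⟨hmS, hmQ⟩, ?_⟩
      intro r hr hd
      exact hmin r (Finset.mem_filter.mpr ⟨hr.1, hr.2⟩) ⟨by linarith [hd.1], by linarith [hd.2]⟩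
    have hmc : color m = c := hsafe.2.2.2.2 m hmMin
    have hmq : m ≠ q := fun h => hqc (by rw [← h, hmc, hpc])
    have hne := hgp m (by exact hmS) q hqS hmq
    refine hsees m (by exact hmS) (openRect_of p q m ?_ ?_)
    · exact Or.inr ⟨lt_of_le_of_ne hmx' (Ne.symm hne.1), lt_trans hmQ.1 hpB.1⟩
    · exact Or.inr ⟨lt_of_le_of_ne hmy' (Ne.symm hne.2), lt_trans hmQ.2 hpB.2.2.1⟩
  · -- NW quadrant: q.1 < x0, y1 < q.2; a = -1, b = 1
    have hqQ : q ∈ B.NW := ⟨hx, hy⟩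
    obtain ⟨m, hmT, ⟨hmx, hmy⟩, hmin⟩ :=
      exists_dom_min (-1) 1 (by norm_num) one_ne_zero
        (S.filter (fun r => r ∈ B.NW)) q (Finset.mem_filter.mpr ⟨hqS', hqQ⟩)
    rw [Finset.mem_filter] at hmT
    obtain ⟨hmS, hmQ⟩ := hmT
    have hmx' : q.1 ≤ m.1 := by linarith
    have hmy' : m.2 ≤ q.2 := by linarith
    have hmMin : m ∈ nwMinSet ((↑S : Set Pt) ∩ B.NW) := by
      refine ⟨⟨hmS, hmQ⟩, ?_⟩
      intro r hr hd
      exact hmin r (Finset.mem_filter.mpr ⟨hr.1, hr.2⟩) ⟨by linarith [hd.1], by linarith [hd.2]⟩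
    have hmc : color m = c := hsafe.2.2.1 m hmMin
    have hmq : m ≠ q := fun h => hqc (by rw [← h, hmc, hpc])
    have hne := hgp m (by exact hmS) q hqS hmq
    refine hsees m (by exact hmS) (openRect_of p q m ?_ ?_)
    · exact Or.inr ⟨lt_of_le_of_ne hmx' (Ne.symm hne.1), lt_trans hmQ.1 hpB.1⟩
    · exact Or.inl ⟨lt_trans hpB.2.2.2 hmQ.2, lt_of_le_of_ne hmy' hne.2⟩
  · -- SE quadrant: x1 < q.1, q.2 < y0; a = 1, b = -1
    have hqQ : q ∈ B.SE := ⟨hx, hy⟩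
    obtain ⟨m, hmT, ⟨hmx, hmy⟩, hmin⟩ :=
      exists_dom_min 1 (-1) one_ne_zero (by norm_num)
        (S.filter (fun r => r ∈ B.SE)) q (Finset.mem_filter.mpr ⟨hqS', hqQ⟩)
    rw [Finset.mem_filter] at hmT
    obtain ⟨hmS, hmQ⟩ := hmT
    have hmx' : m.1 ≤ q.1 := by linarith
    have hmy' : q.2 ≤ m.2 := by linarith
    have hmMin : m ∈ seMinSet ((↑S : Set Pt) ∩ B.SE) := by
      refine ⟨⟨hmS, hmQ⟩, ?_⟩
      intro r hr hd
      exact hmin r (Finset.mem_filter.mpr ⟨hr.1, hr.2⟩) ⟨by linarith [hd.1], by linarith [hd.2]⟩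
    have hmc : color m = c := hsafe.2.2.2.1 m hmMin
    have hmq : m ≠ q := fun h => hqc (by rw [← h, hmc, hpc])
    have hne := hgp m (by exact hmS) q hqS hmq
    refine hsees m (by exact hmS) (openRect_of p q m ?_ ?_)
    · exact Or.inl ⟨lt_trans hpB.2.1 hmQ.1, lt_of_le_of_ne hmx' hne.1⟩
    · exact Or.inr ⟨lt_of_le_of_ne hmy' (Ne.symm hne.2), lt_trans hmQ.2 hpB.2.2.1⟩
  · -- NE quadrant: x1 < q.1, y1 < q.2; a = 1, b = 1
    have hqQ : q ∈ B.NE := ⟨hx, hy⟩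
    obtain ⟨m, hmT, ⟨hmx, hmy⟩, hmin⟩ :=
      exists_dom_min 1 1 one_ne_zero one_ne_zero
        (S.filter (fun r => r ∈ B.NE)) q (Finset.mem_filter.mpr ⟨hqS', hqQ⟩)
    rw [Finset.mem_filter] at hmT
    obtain ⟨hmS, hmQ⟩ := hmT
    have hmx' : m.1 ≤ q.1 := by linarith
    have hmy' : m.2 ≤ q.2 := by linarith
    have hmMin : m ∈ neMinSet ((↑S : Set Pt) ∩ B.NE) := by
      refine ⟨⟨hmS, hmQ⟩, ?_⟩
      intro r hr hd
      exact hmin r (Finset.mem_filter.mpr ⟨hr.1, hr.2⟩) ⟨by linarith [hd.1], by linarith [hd.2]⟩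
    have hmc : color m = c := hsafe.2.1 m hmMin
    have hmq : m ≠ q := fun h => hqc (by rw [← h, hmc, hpc])
    have hne := hgp m (by exact hmS) q hqS hmq
    refine hsees m (by exact hmS) (openRect_of p q m ?_ ?_)
    · exact Or.inl ⟨lt_trans hpB.2.1 hmQ.1, lt_of_le_of_ne hmx' hne.1⟩
    · exact Or.inl ⟨lt_trans hpB.2.2.2 hmQ.2, lt_of_le_of_ne hmy' hne.2⟩

/-- If a point of `S` is contained in a safe box, then it does not participate in `S`. -/
theorem stmt1 (S : Finset Pt) (color : Pt → Bool) (hgp : genPos (↑S : Set Pt))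
    (B : Box) (hbd : ∀ q ∈ S, B.offBoundary q)
    (p : Pt) (hp : p ∈ S) (hpB : B.inside p)
    (hsafe : isSafe (↑S : Set Pt) color B) :
    ¬ participates (↑S : Set Pt) color p := by
  rcases hsafe with h | h
  · exact stmt1_aux S color hgp B p hp hpB true h
  · exact stmt1_aux S color hgp B p hp hpB false h
end
end

section
/- Let S be a finite set of red and blue points in the plane with pairwise distinct x and y coordinates, let p ∈ S, and let B be an axis-aligned box with no point of S on the boundary of B or of its quadrants. If B is not safe, then there exists a position p' in the interior of B such that, in the set (S \ {p}) ∪ {p'} with p' keeping the color of p, the point p' participates: some point of the opposite color spans an empty axis-aligned rectangle with p'. -/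
open Classical

noncomputable section

lemma exists_avoid (F : Finset ℝ) {u v : ℝ} (h : u < v) :
    ∃ a, u < a ∧ a < v ∧ a ∉ F := by
  obtain ⟨a, ha, haF⟩ := (Set.Ioo_infinite h).exists_notMem_finset F
  exact ⟨a, ha.1, ha.2, haF⟩

lemma pick_above (F : Finset ℝ) {u v : ℝ} (h : u < v) :
    ∃ a, u < a ∧ a < v ∧ a ∉ F ∧ ∀ x ∈ F, a < x → v ≤ x := by
  classical
  have hne : (insert u (F.filter (fun x => x < v))).Nonempty :=
    ⟨u, Finset.mem_insert_self _ _⟩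
  obtain ⟨m, hmmem, hmmax⟩ : ∃ m ∈ insert u (F.filter (fun x => x < v)),
      ∀ x ∈ insert u (F.filter (fun x => x < v)), x ≤ m :=
    ⟨_, Finset.max'_mem _ hne, fun x hx => Finset.le_max' _ x hx⟩
  have hmv : m < v := by
    rcases Finset.mem_insert.mp hmmem with h1 | h1
    · exact h1 ▸ h
    · exact (Finset.mem_filter.mp h1).2
  obtain ⟨a, hma, hav, haF⟩ := exists_avoid F hmv
  have hum : u ≤ m := hmmax u (Finset.mem_insert_self _ _)
  refine ⟨a, lt_of_le_of_lt hum hma, hav, haF, ?_⟩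
  intro x hx hax
  by_contra hxv
  push_neg at hxv
  exact absurd
    (lt_of_le_of_lt (hmmax x (Finset.mem_insert_of_mem (Finset.mem_filter.mpr ⟨hx, hxv⟩))) hma)
    (not_lt.mpr hax.le)

lemma pick_below (F : Finset ℝ) {u v : ℝ} (h : u < v) :
    ∃ a, u < a ∧ a < v ∧ a ∉ F ∧ ∀ x ∈ F, x < a → x ≤ u := by
  classical
  have hne : (insert v (F.filter (fun x => u < x))).Nonempty :=
    ⟨v, Finset.mem_insert_self _ _⟩
  obtain ⟨m, hmmem, hmmin⟩ : ∃ m ∈ insert v (F.filter (fun x => u < x)),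
      ∀ x ∈ insert v (F.filter (fun x => u < x)), m ≤ x :=
    ⟨_, Finset.min'_mem _ hne, fun x hx => Finset.min'_le _ x hx⟩
  have hum : u < m := by
    rcases Finset.mem_insert.mp hmmem with h1 | h1
    · exact h1 ▸ h
    · exact (Finset.mem_filter.mp h1).2
  obtain ⟨a, hua, ham, haF⟩ := exists_avoid F hum
  have hmv : m ≤ v := hmmin v (Finset.mem_insert_self _ _)
  refine ⟨a, hua, lt_of_lt_of_le ham hmv, haF, ?_⟩
  intro x hx hxa
  by_contra hxu
  push_neg at hxu
  exact absurd
    (lt_of_lt_of_le ham (hmmin x (Finset.mem_insert_of_mem (Finset.mem_filter.mpr ⟨hx, hxu⟩))))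
    (not_lt.mpr hxa.le)

lemma not_openRect_left (p q : Pt) : ¬ openRect p q p := by
  rintro ⟨h1, h2, -, -⟩
  rcases le_total p.1 q.1 with h | h
  · rw [min_eq_left h] at h1; exact lt_irrefl _ h1
  · rw [max_eq_left h] at h2; exact lt_irrefl _ h2

lemma conclude (S : Finset Pt) (color : Pt → Bool) (B : Box) (p q p' : Pt)
    (hq : q ∈ S) (hqp' : q ≠ p') (hcol : color q ≠ color p)
    (hin : B.inside p')
    (hsees : ∀ z ∈ (↑S : Set Pt), ¬ openRect p' q z) :
    B.inside p' ∧ participates (((↑S : Set Pt) \ {p}) ∪ {p'})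
      (Function.update color p' (color p)) p' := by
  have hqp : q ≠ p := fun h => hcol (by rw [h])
  refine ⟨hin, q, Set.mem_union_left _ ⟨hq, hqp⟩, ?_, ?_⟩
  · rw [Function.update_of_ne hqp', Function.update_self]
    exact hcol
  · intro z hz
    rcases (Set.mem_union _ _ _).mp hz with hzm | hzm
    · exact hsees z hzm.1
    · rw [Set.mem_singleton_iff] at hzm
      rw [hzm]
      exact not_openRect_left p' q

/-- If `B` is not safe, a point `p ∈ S` can be moved inside `B` so that it participates. -/
theorem stmt2 (S : Finset Pt) (color : Pt → Bool) (hgp : genPos (↑S : Set Pt))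
    (B : Box) (hbd : ∀ q ∈ S, B.offBoundary q)
    (p : Pt) (hp : p ∈ S)
    (hunsafe : ¬ isSafe (↑S : Set Pt) color B) :
    ∃ p' : Pt, B.inside p' ∧
      participates (((↑S : Set Pt) \ {p}) ∪ {p'})
        (Function.update color p' (color p)) p' := by
  classical
  set Sx : Finset ℝ := S.image Prod.fst with hSx
  set Sy : Finset ℝ := S.image Prod.snd with hSy
  have hxmem : ∀ z ∈ S, z.1 ∈ Sx := fun z hz => Finset.mem_image_of_mem _ hz
  have hymem : ∀ z ∈ S, z.2 ∈ Sy := fun z hz => Finset.mem_image_of_mem _ hz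
  have hns : ¬ safeFor (↑S : Set Pt) color (color p) B := by
    intro h
    cases hc : color p
    · exact hunsafe (Or.inr (hc ▸ h))
    · exact hunsafe (Or.inl (hc ▸ h))
  rw [safeFor] at hns
  rcases not_and_or.mp hns with hcase | hns
  · -- a wrongly-colored point in the cross
    rw [crossSafeFor] at hcase
    push_neg at hcase
    obtain ⟨q, hqS, hqcross, hqcol⟩ := hcase
    have hqS' : q ∈ S := hqS
    obtain ⟨hb0, hb1, hb2, hb3⟩ := hbd q hqS'
    rcases hqcross with ⟨hx0, hx1⟩ | ⟨hy0, hy1⟩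
    · -- vertical strip
      have h0q : B.x0 < q.1 := lt_of_le_of_ne hx0 (Ne.symm hb0)
      have hq1 : q.1 < B.x1 := lt_of_le_of_ne hx1 hb1
      obtain ⟨a, ha0, haq, haF, hkey⟩ := pick_above Sx h0q
      refine ⟨(a, (B.y0 + B.y1) / 2), conclude S color B p q _ hqS' ?_ hqcol ?_ ?_⟩
      · intro h
        have hm := hxmem q hqS'
        rw [h] at hm
        exact haF hm
      · exact ⟨ha0, haq.trans hq1, by constructor <;> · simp only; linarith [B.hy]⟩
      · rintro z hzS ⟨h1, h2, -, -⟩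
        rw [min_eq_left haq.le] at h1
        rw [max_eq_right haq.le] at h2
        exact absurd (hkey z.1 (hxmem z hzS) h1) (not_le.mpr h2)
    · -- horizontal strip
      have h0q : B.y0 < q.2 := lt_of_le_of_ne hy0 (Ne.symm hb2)
      have hq1 : q.2 < B.y1 := lt_of_le_of_ne hy1 hb3
      obtain ⟨b, hb0', hbq, hbF, hkey⟩ := pick_above Sy h0q
      refine ⟨((B.x0 + B.x1) / 2, b), conclude S color B p q _ hqS' ?_ hqcol ?_ ?_⟩
      · intro h
        have hm := hymem q hqS'
        rw [h] at hm
        exact hbF hm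
      · exact ⟨by simp only; linarith [B.hx], by simp only; linarith [B.hx], hb0', hbq.trans hq1⟩
      · rintro z hzS ⟨-, -, h1, h2⟩
        rw [min_eq_left hbq.le] at h1
        rw [max_eq_right hbq.le] at h2
        exact absurd (hkey z.2 (hymem z hzS) h1) (not_le.mpr h2)
  · rcases not_and_or.mp hns with hcase | hns
    · -- NE quadrant
      push_neg at hcase
      obtain ⟨q, hqmin, hqcol⟩ := hcase
      obtain ⟨⟨hqS, hq1, hq2⟩, hmin⟩ := hqmin
      have hqS' : q ∈ S := hqS
      obtain ⟨a, ha0, ha1, haF, hkeyx⟩ := pick_above Sx B.hx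
      obtain ⟨b, hb0', hb1', hbF, hkeyy⟩ := pick_above Sy B.hy
      refine ⟨(a, b), conclude S color B p q _ hqS' ?_ hqcol ⟨ha0, ha1, hb0', hb1'⟩ ?_⟩
      · intro h
        have hm := hxmem q hqS'
        rw [h] at hm
        exact haF hm
      · rintro z hzS ⟨h1, h2, h3, h4⟩
        rw [min_eq_left (ha1.trans hq1).le] at h1
        rw [max_eq_right (ha1.trans hq1).le] at h2
        rw [min_eq_left (hb1'.trans hq2).le] at h3
        rw [max_eq_right (hb1'.trans hq2).le] at h4
        have hzx : B.x1 < z.1 :=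
          lt_of_le_of_ne (hkeyx z.1 (hxmem z hzS) h1) (Ne.symm (hbd z hzS).2.1)
        have hzy : B.y1 < z.2 :=
          lt_of_le_of_ne (hkeyy z.2 (hymem z hzS) h3) (Ne.symm (hbd z hzS).2.2.2)
        have := hmin z ⟨hzS, hzx, hzy⟩ ⟨h2.le, h4.le⟩
        rw [this] at h2
        exact lt_irrefl _ h2
    · rcases not_and_or.mp hns with hcase | hns
      · -- NW quadrant
        push_neg at hcase
        obtain ⟨q, hqmin, hqcol⟩ := hcase
        obtain ⟨⟨hqS, hq1, hq2⟩, hmin⟩ := hqmin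
        have hqS' : q ∈ S := hqS
        obtain ⟨a, ha0, ha1, haF, hkeyx⟩ := pick_below Sx B.hx
        obtain ⟨b, hb0', hb1', hbF, hkeyy⟩ := pick_above Sy B.hy
        refine ⟨(a, b), conclude S color B p q _ hqS' ?_ hqcol ⟨ha0, ha1, hb0', hb1'⟩ ?_⟩
        · intro h
          have hm := hxmem q hqS'
          rw [h] at hm
          exact haF hm
        · rintro z hzS ⟨h1, h2, h3, h4⟩
          have haq : q.1 < a := hq1.trans ha0
          rw [min_eq_right haq.le] at h1
          rw [max_eq_left haq.le] at h2
          rw [min_eq_left (hb1'.trans hq2).le] at h3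
          rw [max_eq_right (hb1'.trans hq2).le] at h4
          have hzx : z.1 < B.x0 :=
            lt_of_le_of_ne (hkeyx z.1 (hxmem z hzS) h2) (hbd z hzS).1
          have hzy : B.y1 < z.2 :=
            lt_of_le_of_ne (hkeyy z.2 (hymem z hzS) h3) (Ne.symm (hbd z hzS).2.2.2)
          have := hmin z ⟨hzS, hzx, hzy⟩ ⟨h1.le, h4.le⟩
          rw [this] at h1
          exact lt_irrefl _ h1
      · rcases not_and_or.mp hns with hcase | hcase
        · -- SE quadrant
          push_neg at hcase
          obtain ⟨q, hqmin, hqcol⟩ := hcase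
          obtain ⟨⟨hqS, hq1, hq2⟩, hmin⟩ := hqmin
          have hqS' : q ∈ S := hqS
          obtain ⟨a, ha0, ha1, haF, hkeyx⟩ := pick_above Sx B.hx
          obtain ⟨b, hb0', hb1', hbF, hkeyy⟩ := pick_below Sy B.hy
          refine ⟨(a, b), conclude S color B p q _ hqS' ?_ hqcol ⟨ha0, ha1, hb0', hb1'⟩ ?_⟩
          · intro h
            have hm := hxmem q hqS'
            rw [h] at hm
            exact haF hm
          · rintro z hzS ⟨h1, h2, h3, h4⟩
            have hbq : q.2 < b := hq2.trans hb0'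
            rw [min_eq_left (ha1.trans hq1).le] at h1
            rw [max_eq_right (ha1.trans hq1).le] at h2
            rw [min_eq_right hbq.le] at h3
            rw [max_eq_left hbq.le] at h4
            have hzx : B.x1 < z.1 :=
              lt_of_le_of_ne (hkeyx z.1 (hxmem z hzS) h1) (Ne.symm (hbd z hzS).2.1)
            have hzy : z.2 < B.y0 :=
              lt_of_le_of_ne (hkeyy z.2 (hymem z hzS) h4) (hbd z hzS).2.2.1
            have := hmin z ⟨hzS, hzx, hzy⟩ ⟨h2.le, h3.le⟩
            rw [this] at h2
            exact lt_irrefl _ h2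
        · -- SW quadrant
          push_neg at hcase
          obtain ⟨q, hqmin, hqcol⟩ := hcase
          obtain ⟨⟨hqS, hq1, hq2⟩, hmin⟩ := hqmin
          have hqS' : q ∈ S := hqS
          obtain ⟨a, ha0, ha1, haF, hkeyx⟩ := pick_below Sx B.hx
          obtain ⟨b, hb0', hb1', hbF, hkeyy⟩ := pick_below Sy B.hy
          refine ⟨(a, b), conclude S color B p q _ hqS' ?_ hqcol ⟨ha0, ha1, hb0', hb1'⟩ ?_⟩
          · intro h
            have hm := hxmem q hqS'
            rw [h] at hm
            exact haF hm
          · rintro z hzS ⟨h1, h2, h3, h4⟩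
            have haq : q.1 < a := hq1.trans ha0
            have hbq : q.2 < b := hq2.trans hb0'
            rw [min_eq_right haq.le] at h1
            rw [max_eq_left haq.le] at h2
            rw [min_eq_right hbq.le] at h3
            rw [max_eq_left hbq.le] at h4
            have hzx : z.1 < B.x0 :=
              lt_of_le_of_ne (hkeyx z.1 (hxmem z hzS) h2) (hbd z hzS).1
            have hzy : z.2 < B.y0 :=
              lt_of_le_of_ne (hkeyy z.2 (hymem z hzS) h4) (hbd z hzS).2.2.1
            have := hmin z ⟨hzS, hzx, hzy⟩ ⟨h1.le, h3.le⟩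
            rw [this] at h1
            exact lt_irrefl _ h1
end
end

section
/- Let S be a finite bichromatic point set and B a red-cross-safe axis-aligned box (all points of S in cross(B) are red). Then all points of S contained in B dominate the same subset of blue points of S, and all points of S contained in B are dominated by the same subset of blue points of S. -/
open Classical

noncomputable section

/-- In a red-cross-safe box, all points of `S` dominate the same blue points of `S`
and are dominated by the same blue points of `S`. -/
theorem stmt5 (S : Finset Pt) (color : Pt → Bool) (hgp : genPos (↑S : Set Pt))
    (B : Box) (hbd : ∀ q ∈ S, B.offBoundary q)
    (hcs : crossSafeFor (↑S : Set Pt) color true B) :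
    ∀ p ∈ S, ∀ p' ∈ S, B.inside p → B.inside p' →
      ∀ q ∈ S, color q = false →
        ((q.1 ≤ p.1 ∧ q.2 ≤ p.2) ↔ (q.1 ≤ p'.1 ∧ q.2 ≤ p'.2)) ∧
        ((p.1 ≤ q.1 ∧ p.2 ≤ q.2) ↔ (p'.1 ≤ q.1 ∧ p'.2 ≤ q.2)) := by
  intro p hp p' hp' hip hip' q hq hqb
  have hqc : q ∉ B.cross := fun hc => by
    have := hcs q (by exact_mod_cast hq) hc
    simp [hqb] at this
  simp only [Box.cross, Set.mem_setOf_eq, not_or, not_and_or, not_le] at hqc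
  obtain ⟨hx, hy⟩ := hqc
  obtain ⟨h1, h2, h3, h4⟩ := hip
  obtain ⟨h1', h2', h3', h4'⟩ := hip'
  rcases hx with hx | hx <;> rcases hy with hy | hy <;>
    constructor <;> constructor <;> intro ⟨ha, hb⟩ <;>
    constructor <;> linarith
end
end

section
/- If B is a safe axis-aligned box for a bichromatic point set S, then any axis-aligned sub-box B' ⊆ B (with no point of S on the boundary of B' or its quadrants) is also safe for S. -/
open Classical

noncomputable section

theorem safeFor_subbox (S : Set Pt) (color : Pt → Bool) (c : Bool) (B B' : Box)
    (hsub : B.x0 ≤ B'.x0 ∧ B'.x1 ≤ B.x1 ∧ B.y0 ≤ B'.y0 ∧ B'.y1 ≤ B.y1)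
    (h : safeFor S color c B) : safeFor S color c B' := by
  obtain ⟨h01, h11, h02, h12⟩ := hsub
  obtain ⟨hcr, hne, hnw, hse, hsw⟩ := h
  have hx' := B'.hx
  have hy' := B'.hy
  refine ⟨?_, ?_, ?_, ?_, ?_⟩
  · intro p hp hpc
    apply hcr p hp
    rcases hpc with ⟨a, b⟩ | ⟨a, b⟩
    · exact Or.inl ⟨le_trans h01 a, le_trans b h11⟩
    · exact Or.inr ⟨le_trans h02 a, le_trans b h12⟩
  · rintro p ⟨⟨hpS, hq1, hq2⟩, hmin⟩
    by_cases hc : p ∈ B.cross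
    · exact hcr p hpS hc
    · simp only [Box.cross, Set.mem_setOf_eq, not_or, not_and, not_le] at hc
      have hx : B.x1 < p.1 := hc.1 (by linarith)
      have hy : B.y1 < p.2 := hc.2 (by linarith)
      refine hne p ⟨⟨hpS, hx, hy⟩, ?_⟩
      rintro q ⟨hqS, hqx, hqy⟩ hle
      exact hmin q ⟨hqS, by linarith, by linarith⟩ hle
  · rintro p ⟨⟨hpS, hq1, hq2⟩, hmin⟩
    by_cases hc : p ∈ B.cross
    · exact hcr p hpS hc
    · simp only [Box.cross, Set.mem_setOf_eq, not_or, not_and, not_le] at hc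
      have hx : p.1 < B.x0 := by
        by_contra h
        push_neg at h
        have := hc.1 h
        linarith
      have hy : B.y1 < p.2 := hc.2 (by linarith)
      refine hnw p ⟨⟨hpS, hx, hy⟩, ?_⟩
      rintro q ⟨hqS, hqx, hqy⟩ hle
      exact hmin q ⟨hqS, by linarith, by linarith⟩ hle
  · rintro p ⟨⟨hpS, hq1, hq2⟩, hmin⟩
    by_cases hc : p ∈ B.cross
    · exact hcr p hpS hc
    · simp only [Box.cross, Set.mem_setOf_eq, not_or, not_and, not_le] at hc
      have hx : B.x1 < p.1 := hc.1 (by linarith)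
      have hy : p.2 < B.y0 := by
        by_contra h
        push_neg at h
        have := hc.2 h
        linarith
      refine hse p ⟨⟨hpS, hx, hy⟩, ?_⟩
      rintro q ⟨hqS, hqx, hqy⟩ hle
      exact hmin q ⟨hqS, by linarith, by linarith⟩ hle
  · rintro p ⟨⟨hpS, hq1, hq2⟩, hmin⟩
    by_cases hc : p ∈ B.cross
    · exact hcr p hpS hc
    · simp only [Box.cross, Set.mem_setOf_eq, not_or, not_and, not_le] at hc
      have hx : p.1 < B.x0 := by
        by_contra h
        push_neg at h
        have := hc.1 h
        linarith
      have hy : p.2 < B.y0 := by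
        by_contra h
        push_neg at h
        have := hc.2 h
        linarith
      refine hsw p ⟨⟨hpS, hx, hy⟩, ?_⟩
      rintro q ⟨hqS, hqx, hqy⟩ hle
      exact hmin q ⟨hqS, by linarith, by linarith⟩ hle

/-- Any sub-box of a safe box is safe. -/
theorem stmt7 (S : Finset Pt) (color : Pt → Bool) (hgp : genPos (↑S : Set Pt))
    (B B' : Box)
    (hsub : B.x0 ≤ B'.x0 ∧ B'.x1 ≤ B.x1 ∧ B.y0 ≤ B'.y0 ∧ B'.y1 ≤ B.y1)
    (hbd' : ∀ q ∈ S, B'.offBoundary q)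
    (hsafe : isSafe (↑S : Set Pt) color B) :
    isSafe (↑S : Set Pt) color B' := by
  rcases hsafe with h | h
  · exact Or.inl (safeFor_subbox _ color true B B' hsub h)
  · exact Or.inr (safeFor_subbox _ color false B B' hsub h)
end
end

section
/- Let S be a finite bichromatic point set and S' ⊆ S a subset that contains all points participating in S (S' conforms with S). Then: (1) an axis-aligned box B is safe for S if and only if it is safe for S'; and (2) a point p ∈ S' participates in S if and only if it participates in S'. -/
open Classical

noncomputable section

/-! ### Auxiliary lemmas -/

section Aux

lemma openRect_comm (p q z : Pt) : openRect p q z ↔ openRect q p z := by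
  unfold openRect
  rw [min_comm p.1 q.1, max_comm p.1 q.1, min_comm p.2 q.2, max_comm p.2 q.2]

lemma not_openRect_right (p q : Pt) : ¬ openRect p q q := by
  rw [openRect_comm]; exact not_openRect_left q p

lemma openRect_trans {p q z u : Pt} (h1 : openRect p q z) (h2 : openRect p z u) :
    openRect p q u := by
  obtain ⟨a1, a2, a3, a4⟩ := h1
  obtain ⟨b1, b2, b3, b4⟩ := h2
  refine ⟨lt_of_le_of_lt (le_min (min_le_left _ _) a1.le) b1,
    lt_of_lt_of_le b2 (max_le (le_max_left _ _) a2.le),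
    lt_of_le_of_lt (le_min (min_le_left _ _) a3.le) b3,
    lt_of_lt_of_le b4 (max_le (le_max_left _ _) a4.le)⟩

lemma openRect_trans' {p q z u : Pt} (h1 : openRect p q z) (h2 : openRect z q u) :
    openRect p q u := by
  rw [openRect_comm] at h1 h2 ⊢
  exact openRect_trans h1 h2

/-- `p` sees the closed box in `T`. -/
def bsee (T : Set Pt) (B : Box) (p : Pt) : Prop :=
  ∃ b, B.memClosed b ∧ ∀ z ∈ T, ¬ openRect p b z

lemma bsee_mono {T T' : Set Pt} (h : T' ⊆ T) {B : Box} {p : Pt} (hb : bsee T B p) :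
    bsee T' B p := by
  obtain ⟨b, hb1, hb2⟩ := hb
  exact ⟨b, hb1, fun z hz => hb2 z (h hz)⟩

lemma region (B : Box) (p : Pt) :
    p ∈ B.cross ∨ p ∈ B.NE ∨ p ∈ B.NW ∨ p ∈ B.SE ∨ p ∈ B.SW := by
  rcases lt_or_ge p.1 B.x0 with hx | hx
  · rcases lt_or_ge p.2 B.y0 with hy | hy
    · exact Or.inr (Or.inr (Or.inr (Or.inr ⟨hx, hy⟩)))
    · rcases le_or_gt p.2 B.y1 with hy' | hy'
      · exact Or.inl (Or.inr ⟨hy, hy'⟩)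
      · exact Or.inr (Or.inr (Or.inl ⟨hx, hy'⟩))
  · rcases le_or_gt p.1 B.x1 with hx' | hx'
    · exact Or.inl (Or.inl ⟨hx, hx'⟩)
    · rcases lt_or_ge p.2 B.y0 with hy | hy
      · exact Or.inr (Or.inr (Or.inr (Or.inl ⟨hx', hy⟩)))
      · rcases le_or_gt p.2 B.y1 with hy' | hy'
        · exact Or.inl (Or.inr ⟨hy, hy'⟩)
        · exact Or.inr (Or.inl ⟨hx', hy'⟩)

lemma cross_bsee (B : Box) (T : Set Pt) (p : Pt) (hp : p ∈ B.cross) : bsee T B p := by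
  refine ⟨(max B.x0 (min p.1 B.x1), max B.y0 (min p.2 B.y1)),
    ⟨le_max_left _ _, max_le B.hx.le (min_le_right _ _),
     le_max_left _ _, max_le B.hy.le (min_le_right _ _)⟩, ?_⟩
  intro z _ hr
  obtain ⟨a1, a2, a3, a4⟩ := hr
  rcases hp with ⟨h1, h2⟩ | ⟨h1, h2⟩
  · have hb : max B.x0 (min p.1 B.x1) = p.1 := by rw [min_eq_left h2, max_eq_right h1]
    simp only [hb] at a1 a2
    simp only [min_self, max_self] at a1 a2
    linarith
  · have hb : max B.y0 (min p.2 B.y1) = p.2 := by rw [min_eq_left h2, max_eq_right h1]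
    simp only [hb] at a3 a4
    simp only [min_self, max_self] at a3 a4
    linarith

end Aux
section Quad

lemma ne_min_bsee (B : Box) (T : Set Pt) {p : Pt} (hp : p ∈ neMinSet (T ∩ B.NE)) :
    bsee T B p := by
  obtain ⟨⟨hpT, hx, hy⟩, hmin⟩ := hp
  refine ⟨(B.x1, B.y1), ⟨B.hx.le, le_refl _, B.hy.le, le_refl _⟩, ?_⟩
  rintro z hz ⟨a1, a2, a3, a4⟩
  simp only [min_eq_right hx.le, max_eq_left hx.le, min_eq_right hy.le,
    max_eq_left hy.le] at a1 a2 a3 a4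
  have := hmin z ⟨hz, a1, a3⟩ ⟨a2.le, a4.le⟩
  rw [this] at a2; exact lt_irrefl _ a2

lemma nw_min_bsee (B : Box) (T : Set Pt) {p : Pt} (hp : p ∈ nwMinSet (T ∩ B.NW)) :
    bsee T B p := by
  obtain ⟨⟨hpT, hx, hy⟩, hmin⟩ := hp
  refine ⟨(B.x0, B.y1), ⟨le_refl _, B.hx.le, B.hy.le, le_refl _⟩, ?_⟩
  rintro z hz ⟨a1, a2, a3, a4⟩
  simp only [min_eq_left hx.le, max_eq_right hx.le, min_eq_right hy.le,
    max_eq_left hy.le] at a1 a2 a3 a4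
  have := hmin z ⟨hz, a2, a3⟩ ⟨a1.le, a4.le⟩
  rw [this] at a1; exact lt_irrefl _ a1

lemma se_min_bsee (B : Box) (T : Set Pt) {p : Pt} (hp : p ∈ seMinSet (T ∩ B.SE)) :
    bsee T B p := by
  obtain ⟨⟨hpT, hx, hy⟩, hmin⟩ := hp
  refine ⟨(B.x1, B.y0), ⟨B.hx.le, le_refl _, le_refl _, B.hy.le⟩, ?_⟩
  rintro z hz ⟨a1, a2, a3, a4⟩
  simp only [min_eq_right hx.le, max_eq_left hx.le, min_eq_left hy.le,
    max_eq_right hy.le] at a1 a2 a3 a4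
  have := hmin z ⟨hz, a1, a4⟩ ⟨a2.le, a3.le⟩
  rw [this] at a2; exact lt_irrefl _ a2

lemma sw_min_bsee (B : Box) (T : Set Pt) {p : Pt} (hp : p ∈ swMinSet (T ∩ B.SW)) :
    bsee T B p := by
  obtain ⟨⟨hpT, hx, hy⟩, hmin⟩ := hp
  refine ⟨(B.x0, B.y0), ⟨le_refl _, B.hx.le, le_refl _, B.hy.le⟩, ?_⟩
  rintro z hz ⟨a1, a2, a3, a4⟩
  simp only [min_eq_left hx.le, max_eq_right hx.le, min_eq_left hy.le,
    max_eq_right hy.le] at a1 a2 a3 a4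
  have := hmin z ⟨hz, a2, a4⟩ ⟨a1.le, a3.le⟩
  rw [this] at a1; exact lt_irrefl _ a1

lemma bsee_ne_min (B : Box) (T : Set Pt) (hgp : genPos T) {p : Pt} (hpT : p ∈ T)
    (hq : p ∈ B.NE) (hb : bsee T B p) : p ∈ neMinSet (T ∩ B.NE) := by
  obtain ⟨b, ⟨c1, c2, c3, c4⟩, hemp⟩ := hb
  refine ⟨⟨hpT, hq⟩, ?_⟩
  rintro u ⟨huT, hux, huy⟩ ⟨l1, l2⟩
  by_contra hne
  obtain ⟨d1, d2⟩ := hgp u huT p hpT hne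
  exact hemp u huT ⟨lt_of_le_of_lt (le_trans (min_le_right _ _) c2) hux,
    lt_of_lt_of_le (lt_of_le_of_ne l1 d1) (le_max_left _ _),
    lt_of_le_of_lt (le_trans (min_le_right _ _) c4) huy,
    lt_of_lt_of_le (lt_of_le_of_ne l2 d2) (le_max_left _ _)⟩

lemma bsee_nw_min (B : Box) (T : Set Pt) (hgp : genPos T) {p : Pt} (hpT : p ∈ T)
    (hq : p ∈ B.NW) (hb : bsee T B p) : p ∈ nwMinSet (T ∩ B.NW) := by
  obtain ⟨b, ⟨c1, c2, c3, c4⟩, hemp⟩ := hb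
  refine ⟨⟨hpT, hq⟩, ?_⟩
  rintro u ⟨huT, hux, huy⟩ ⟨l1, l2⟩
  by_contra hne
  obtain ⟨d1, d2⟩ := hgp u huT p hpT hne
  exact hemp u huT ⟨lt_of_le_of_lt (min_le_left _ _) (lt_of_le_of_ne l1 d1.symm),
    lt_of_lt_of_le (lt_of_lt_of_le hux c1) (le_max_right _ _),
    lt_of_le_of_lt (le_trans (min_le_right _ _) c4) huy,
    lt_of_lt_of_le (lt_of_le_of_ne l2 d2) (le_max_left _ _)⟩

lemma bsee_se_min (B : Box) (T : Set Pt) (hgp : genPos T) {p : Pt} (hpT : p ∈ T)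
    (hq : p ∈ B.SE) (hb : bsee T B p) : p ∈ seMinSet (T ∩ B.SE) := by
  obtain ⟨b, ⟨c1, c2, c3, c4⟩, hemp⟩ := hb
  refine ⟨⟨hpT, hq⟩, ?_⟩
  rintro u ⟨huT, hux, huy⟩ ⟨l1, l2⟩
  by_contra hne
  obtain ⟨d1, d2⟩ := hgp u huT p hpT hne
  exact hemp u huT ⟨lt_of_le_of_lt (le_trans (min_le_right _ _) c2) hux,
    lt_of_lt_of_le (lt_of_le_of_ne l1 d1) (le_max_left _ _),
    lt_of_le_of_lt (min_le_left _ _) (lt_of_le_of_ne l2 d2.symm),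
    lt_of_lt_of_le (lt_of_lt_of_le huy c3) (le_max_right _ _)⟩

lemma bsee_sw_min (B : Box) (T : Set Pt) (hgp : genPos T) {p : Pt} (hpT : p ∈ T)
    (hq : p ∈ B.SW) (hb : bsee T B p) : p ∈ swMinSet (T ∩ B.SW) := by
  obtain ⟨b, ⟨c1, c2, c3, c4⟩, hemp⟩ := hb
  refine ⟨⟨hpT, hq⟩, ?_⟩
  rintro u ⟨huT, hux, huy⟩ ⟨l1, l2⟩
  by_contra hne
  obtain ⟨d1, d2⟩ := hgp u huT p hpT hne
  exact hemp u huT ⟨lt_of_le_of_lt (min_le_left _ _) (lt_of_le_of_ne l1 d1.symm),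
    lt_of_lt_of_le (lt_of_lt_of_le hux c1) (le_max_right _ _),
    lt_of_le_of_lt (min_le_left _ _) (lt_of_le_of_ne l2 d2.symm),
    lt_of_lt_of_le (lt_of_lt_of_le huy c3) (le_max_right _ _)⟩

end Quad
section MinExists

lemma exists_ne_min (B : Box) (S : Finset Pt) {w : Pt} (hw : w ∈ S) (hwq : w ∈ B.NE) :
    ∃ m, m ∈ S ∧ m.1 ≤ w.1 ∧ m.2 ≤ w.2 ∧ m ∈ neMinSet ((↑S : Set Pt) ∩ B.NE) := by
  classical
  set F := S.filter (fun u => u ∈ B.NE ∧ u.1 ≤ w.1 ∧ u.2 ≤ w.2) with hF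
  have hFne : F.Nonempty := ⟨w, by simp [hF, hw, hwq]⟩
  obtain ⟨m, hmF, hmin⟩ := F.exists_min_image (fun u => u.1 + u.2) hFne
  simp only [hF, Finset.mem_filter] at hmF
  obtain ⟨hmS, hmq, hm1, hm2⟩ := hmF
  refine ⟨m, hmS, hm1, hm2, ⟨⟨hmS, hmq⟩, ?_⟩⟩
  rintro u ⟨huS, huq⟩ ⟨l1, l2⟩
  have huF : u ∈ F := by
    simp only [hF, Finset.mem_filter]
    exact ⟨huS, huq, le_trans l1 hm1, le_trans l2 hm2⟩
  have := hmin u huF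
  have e1 : u.1 = m.1 := le_antisymm l1 (by linarith)
  have e2 : u.2 = m.2 := le_antisymm l2 (by linarith)
  exact Prod.ext e1 e2

lemma exists_nw_min (B : Box) (S : Finset Pt) {w : Pt} (hw : w ∈ S) (hwq : w ∈ B.NW) :
    ∃ m, m ∈ S ∧ w.1 ≤ m.1 ∧ m.2 ≤ w.2 ∧ m ∈ nwMinSet ((↑S : Set Pt) ∩ B.NW) := by
  classical
  set F := S.filter (fun u => u ∈ B.NW ∧ w.1 ≤ u.1 ∧ u.2 ≤ w.2) with hF
  have hFne : F.Nonempty := ⟨w, by simp [hF, hw, hwq]⟩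
  obtain ⟨m, hmF, hmin⟩ := F.exists_min_image (fun u => u.2 - u.1) hFne
  simp only [hF, Finset.mem_filter] at hmF
  obtain ⟨hmS, hmq, hm1, hm2⟩ := hmF
  refine ⟨m, hmS, hm1, hm2, ⟨⟨hmS, hmq⟩, ?_⟩⟩
  rintro u ⟨huS, huq⟩ ⟨l1, l2⟩
  have huF : u ∈ F := by
    simp only [hF, Finset.mem_filter]
    exact ⟨huS, huq, le_trans hm1 l1, le_trans l2 hm2⟩
  have := hmin u huF
  have e1 : u.1 = m.1 := le_antisymm (by linarith) l1
  have e2 : u.2 = m.2 := le_antisymm l2 (by linarith)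
  exact Prod.ext e1 e2

lemma exists_se_min (B : Box) (S : Finset Pt) {w : Pt} (hw : w ∈ S) (hwq : w ∈ B.SE) :
    ∃ m, m ∈ S ∧ m.1 ≤ w.1 ∧ w.2 ≤ m.2 ∧ m ∈ seMinSet ((↑S : Set Pt) ∩ B.SE) := by
  classical
  set F := S.filter (fun u => u ∈ B.SE ∧ u.1 ≤ w.1 ∧ w.2 ≤ u.2) with hF
  have hFne : F.Nonempty := ⟨w, by simp [hF, hw, hwq]⟩
  obtain ⟨m, hmF, hmin⟩ := F.exists_min_image (fun u => u.1 - u.2) hFne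
  simp only [hF, Finset.mem_filter] at hmF
  obtain ⟨hmS, hmq, hm1, hm2⟩ := hmF
  refine ⟨m, hmS, hm1, hm2, ⟨⟨hmS, hmq⟩, ?_⟩⟩
  rintro u ⟨huS, huq⟩ ⟨l1, l2⟩
  have huF : u ∈ F := by
    simp only [hF, Finset.mem_filter]
    exact ⟨huS, huq, le_trans l1 hm1, le_trans hm2 l2⟩
  have := hmin u huF
  have e1 : u.1 = m.1 := le_antisymm l1 (by linarith)
  have e2 : u.2 = m.2 := le_antisymm (by linarith) l2
  exact Prod.ext e1 e2

lemma exists_sw_min (B : Box) (S : Finset Pt) {w : Pt} (hw : w ∈ S) (hwq : w ∈ B.SW) :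
    ∃ m, m ∈ S ∧ w.1 ≤ m.1 ∧ w.2 ≤ m.2 ∧ m ∈ swMinSet ((↑S : Set Pt) ∩ B.SW) := by
  classical
  set F := S.filter (fun u => u ∈ B.SW ∧ w.1 ≤ u.1 ∧ w.2 ≤ u.2) with hF
  have hFne : F.Nonempty := ⟨w, by simp [hF, hw, hwq]⟩
  obtain ⟨m, hmF, hmin⟩ := F.exists_max_image (fun u => u.1 + u.2) hFne
  simp only [hF, Finset.mem_filter] at hmF
  obtain ⟨hmS, hmq, hm1, hm2⟩ := hmF
  refine ⟨m, hmS, hm1, hm2, ⟨⟨hmS, hmq⟩, ?_⟩⟩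
  rintro u ⟨huS, huq⟩ ⟨l1, l2⟩
  have huF : u ∈ F := by
    simp only [hF, Finset.mem_filter]
    exact ⟨huS, huq, le_trans hm1 l1, le_trans hm2 l2⟩
  have := hmin u huF
  have e1 : u.1 = m.1 := le_antisymm (by linarith) l1
  have e2 : u.2 = m.2 := le_antisymm (by linarith) l2
  exact Prod.ext e1 e2

end MinExists

lemma safeFor_iff_bsee (B : Box) (T : Finset Pt) (hgp : genPos (↑T : Set Pt))
    (color : Pt → Bool) (c : Bool) :
    safeFor (↑T : Set Pt) color c B ↔ ∀ p ∈ T, bsee (↑T : Set Pt) B p → color p = c := by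
  constructor
  · rintro ⟨hcross, hne, hnw, hse, hsw⟩ p hp hb
    rcases region B p with h | h | h | h | h
    · exact hcross p (Finset.mem_coe.mpr hp) h
    · exact hne p (bsee_ne_min B (↑T) hgp (Finset.mem_coe.mpr hp) h hb)
    · exact hnw p (bsee_nw_min B (↑T) hgp (Finset.mem_coe.mpr hp) h hb)
    · exact hse p (bsee_se_min B (↑T) hgp (Finset.mem_coe.mpr hp) h hb)
    · exact hsw p (bsee_sw_min B (↑T) hgp (Finset.mem_coe.mpr hp) h hb)
  · intro h
    refine ⟨fun p hp hc => h p (Finset.mem_coe.mp hp) (cross_bsee B _ p hc),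
      fun p hp => h p (Finset.mem_coe.mp hp.1.1) (ne_min_bsee B _ hp),
      fun p hp => h p (Finset.mem_coe.mp hp.1.1) (nw_min_bsee B _ hp),
      fun p hp => h p (Finset.mem_coe.mp hp.1.1) (se_min_bsee B _ hp),
      fun p hp => h p (Finset.mem_coe.mp hp.1.1) (sw_min_bsee B _ hp)⟩
lemma key_participates (S S' : Finset Pt) (color : Pt → Bool)
    (hconf : ∀ p ∈ S, participates (↑S : Set Pt) color p → p ∈ S') :
    ∀ n : ℕ, ∀ p q : Pt, p ∈ S → q ∈ S → color p ≠ color q →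
      (∀ u ∈ S', ¬ openRect p q u) →
      (S.filter (fun z => openRect p q z)).card ≤ n →
      participates (↑S : Set Pt) color p := by
  intro n
  induction n with
  | zero =>
    intro p q hp hq hcol hfree hcard
    have hemp : ∀ z ∈ S, ¬ openRect p q z := by
      intro z hz hr
      have : z ∈ S.filter (fun z => openRect p q z) := Finset.mem_filter.mpr ⟨hz, hr⟩
      rw [Finset.card_eq_zero.mp (Nat.le_zero.mp hcard)] at this
      exact absurd this (Finset.notMem_empty z)
    exact ⟨q, Finset.mem_coe.mpr hq, hcol.symm, fun z hz => hemp z (Finset.mem_coe.mp hz)⟩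
  | succ n ih =>
    intro p q hp hq hcol hfree hcard
    by_cases hemp : ∀ z ∈ S, ¬ openRect p q z
    · exact ⟨q, Finset.mem_coe.mpr hq, hcol.symm, fun z hz => hemp z (Finset.mem_coe.mp hz)⟩
    · push_neg at hemp
      obtain ⟨w, hwS, hwr⟩ := hemp
      have hwmem : w ∈ S.filter (fun z => openRect p q z) := Finset.mem_filter.mpr ⟨hwS, hwr⟩
      by_cases hcw : color w = color p
      · -- recurse on (w, q); contradiction via conformity
        have hcol' : color w ≠ color q := by rw [hcw]; exact hcol
        have hfree' : ∀ u ∈ S', ¬ openRect w q u :=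
          fun u hu hr => hfree u hu (openRect_trans' hwr hr)
        have hsubf : S.filter (fun z => openRect w q z) ⊆
            (S.filter (fun z => openRect p q z)).erase w := by
          intro u hu
          obtain ⟨huS, hur⟩ := Finset.mem_filter.mp hu
          refine Finset.mem_erase.mpr ⟨?_, Finset.mem_filter.mpr ⟨huS, openRect_trans' hwr hur⟩⟩
          rintro rfl
          exact not_openRect_left u q hur
        have hcard' : (S.filter (fun z => openRect w q z)).card ≤ n := by
          have := Finset.card_le_card hsubf
          rw [Finset.card_erase_of_mem hwmem] at this
          omega
        have hpart : participates (↑S : Set Pt) color w := ih w q hwS hq hcol' hfree' hcard'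
        exact absurd hwr (hfree w (hconf w hwS hpart))
      · -- recurse on (p, w)
        have hcol' : color p ≠ color w := fun h => hcw (h.symm)
        have hfree' : ∀ u ∈ S', ¬ openRect p w u :=
          fun u hu hr => hfree u hu (openRect_trans hwr hr)
        have hsubf : S.filter (fun z => openRect p w z) ⊆
            (S.filter (fun z => openRect p q z)).erase w := by
          intro u hu
          obtain ⟨huS, hur⟩ := Finset.mem_filter.mp hu
          refine Finset.mem_erase.mpr ⟨?_, Finset.mem_filter.mpr ⟨huS, openRect_trans hwr hur⟩⟩
          rintro rfl
          exact not_openRect_right p u hur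
        have hcard' : (S.filter (fun z => openRect p w z)).card ≤ n := by
          have := Finset.card_le_card hsubf
          rw [Finset.card_erase_of_mem hwmem] at this
          omega
        exact ih p w hp hwS hcol' hfree' hcard'
lemma exists_bsee_in_rect (B : Box) (S : Finset Pt) (hgp : genPos (↑S : Set Pt))
    {p q w : Pt} (hp : p ∈ S) (hq : q ∈ S) (hw : w ∈ S)
    (hbp : bsee (↑S : Set Pt) B p) (hbq : bsee (↑S : Set Pt) B q)
    (hwr : openRect p q w) :
    ∃ z, z ∈ S ∧ openRect p q z ∧ bsee (↑S : Set Pt) B z := by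
  have hgp' : ∀ a b : Pt, a ∈ S → b ∈ S → a ≠ b → a.1 ≠ b.1 ∧ a.2 ≠ b.2 :=
    fun a b ha hb => hgp a (Finset.mem_coe.mpr ha) b (Finset.mem_coe.mpr hb)
  rcases region B w with hc | hne | hnw | hse | hsw
  · exact ⟨w, hw, hwr, cross_bsee B _ w hc⟩
  · -- NE quadrant
    obtain ⟨m, hmS, hm1, hm2, hmmin⟩ := exists_ne_min B S hw hne
    have hmq : m ∈ B.NE := hmmin.1.2
    have claimA : ∀ r, r ∈ S → bsee (↑S : Set Pt) B r → m.1 < r.1 → m.2 < r.2 → False := by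
      intro r hr hbr h1 h2
      have hrq : r ∈ B.NE := ⟨lt_trans hmq.1 h1, lt_trans hmq.2 h2⟩
      have hrmin := bsee_ne_min B (↑S) hgp (Finset.mem_coe.mpr hr) hrq hbr
      have heq := hrmin.2 m ⟨Finset.mem_coe.mpr hmS, hmq⟩ ⟨h1.le, h2.le⟩
      rw [heq] at h1; exact lt_irrefl _ h1
    have hmp : m ≠ p := by
      rintro rfl
      have h1 : m.1 < q.1 := by
        by_contra hcon; push_neg at hcon
        have h2 := hwr.2.1; rw [max_eq_left hcon] at h2; linarith
      have h2 : m.2 < q.2 := by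
        by_contra hcon; push_neg at hcon
        have h3 := hwr.2.2.2; rw [max_eq_left hcon] at h3; linarith
      exact claimA q hq hbq h1 h2
    have hmqn : m ≠ q := by
      rintro rfl
      have h1 : m.1 < p.1 := by
        by_contra hcon; push_neg at hcon
        have h2 := hwr.2.1; rw [max_eq_right hcon] at h2; linarith
      have h2 : m.2 < p.2 := by
        by_contra hcon; push_neg at hcon
        have h3 := hwr.2.2.2; rw [max_eq_right hcon] at h3; linarith
      exact claimA p hp hbp h1 h2
    have lx : min p.1 q.1 < m.1 := by
      by_contra hcon; push_neg at hcon
      have hxp : m.1 < p.1 :=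
        lt_of_le_of_ne (le_trans hcon (min_le_left _ _)) (hgp' m p hmS hp hmp).1
      have hxq : m.1 < q.1 :=
        lt_of_le_of_ne (le_trans hcon (min_le_right _ _)) (hgp' m q hmS hq hmqn).1
      have hyp : p.2 < m.2 :=
        lt_of_le_of_ne (le_of_not_gt (fun h => claimA p hp hbp hxp h))
          (fun h => (hgp' m p hmS hp hmp).2 h.symm)
      have hyq : q.2 < m.2 :=
        lt_of_le_of_ne (le_of_not_gt (fun h => claimA q hq hbq hxq h))
          (fun h => (hgp' m q hmS hq hmqn).2 h.symm)
      have h4 := hwr.2.2.2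
      have h5 : max p.2 q.2 < m.2 := max_lt hyp hyq
      linarith
    have ly : min p.2 q.2 < m.2 := by
      by_contra hcon; push_neg at hcon
      have hyp : m.2 < p.2 :=
        lt_of_le_of_ne (le_trans hcon (min_le_left _ _)) (hgp' m p hmS hp hmp).2
      have hyq : m.2 < q.2 :=
        lt_of_le_of_ne (le_trans hcon (min_le_right _ _)) (hgp' m q hmS hq hmqn).2
      have hxp : p.1 < m.1 :=
        lt_of_le_of_ne (le_of_not_gt (fun h => claimA p hp hbp h hyp))
          (fun h => (hgp' m p hmS hp hmp).1 h.symm)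
      have hxq : q.1 < m.1 :=
        lt_of_le_of_ne (le_of_not_gt (fun h => claimA q hq hbq h hyq))
          (fun h => (hgp' m q hmS hq hmqn).1 h.symm)
      have h4 := hwr.2.1
      have h5 : max p.1 q.1 < m.1 := max_lt hxp hxq
      linarith
    exact ⟨m, hmS, ⟨lx, lt_of_le_of_lt hm1 hwr.2.1, ly, lt_of_le_of_lt hm2 hwr.2.2.2⟩,
      ne_min_bsee B _ hmmin⟩
  · -- NW quadrant
    obtain ⟨m, hmS, hm1, hm2, hmmin⟩ := exists_nw_min B S hw hnw
    have hmq : m ∈ B.NW := hmmin.1.2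
    have claimA : ∀ r, r ∈ S → bsee (↑S : Set Pt) B r → r.1 < m.1 → m.2 < r.2 → False := by
      intro r hr hbr h1 h2
      have hrq : r ∈ B.NW := ⟨lt_trans h1 hmq.1, lt_trans hmq.2 h2⟩
      have hrmin := bsee_nw_min B (↑S) hgp (Finset.mem_coe.mpr hr) hrq hbr
      have heq := hrmin.2 m ⟨Finset.mem_coe.mpr hmS, hmq⟩ ⟨h1.le, h2.le⟩
      rw [heq] at h1; exact lt_irrefl _ h1
    have hmp : m ≠ p := by
      rintro rfl
      have h1 : q.1 < m.1 := by
        by_contra hcon; push_neg at hcon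
        have h2 := hwr.1; rw [min_eq_left hcon] at h2; linarith
      have h2 : m.2 < q.2 := by
        by_contra hcon; push_neg at hcon
        have h3 := hwr.2.2.2; rw [max_eq_left hcon] at h3; linarith
      exact claimA q hq hbq h1 h2
    have hmqn : m ≠ q := by
      rintro rfl
      have h1 : p.1 < m.1 := by
        by_contra hcon; push_neg at hcon
        have h2 := hwr.1; rw [min_eq_right hcon] at h2; linarith
      have h2 : m.2 < p.2 := by
        by_contra hcon; push_neg at hcon
        have h3 := hwr.2.2.2; rw [max_eq_right hcon] at h3; linarith
      exact claimA p hp hbp h1 h2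
    have ux : m.1 < max p.1 q.1 := by
      by_contra hcon; push_neg at hcon
      have hxp : p.1 < m.1 :=
        lt_of_le_of_ne (le_trans (le_max_left _ _) hcon)
          (fun h => (hgp' m p hmS hp hmp).1 h.symm)
      have hxq : q.1 < m.1 :=
        lt_of_le_of_ne (le_trans (le_max_right _ _) hcon)
          (fun h => (hgp' m q hmS hq hmqn).1 h.symm)
      have hyp : p.2 < m.2 :=
        lt_of_le_of_ne (le_of_not_gt (fun h => claimA p hp hbp hxp h))
          (fun h => (hgp' m p hmS hp hmp).2 h.symm)
      have hyq : q.2 < m.2 :=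
        lt_of_le_of_ne (le_of_not_gt (fun h => claimA q hq hbq hxq h))
          (fun h => (hgp' m q hmS hq hmqn).2 h.symm)
      have h4 := hwr.2.2.2
      have h5 : max p.2 q.2 < m.2 := max_lt hyp hyq
      linarith
    have ly : min p.2 q.2 < m.2 := by
      by_contra hcon; push_neg at hcon
      have hyp : m.2 < p.2 :=
        lt_of_le_of_ne (le_trans hcon (min_le_left _ _)) (hgp' m p hmS hp hmp).2
      have hyq : m.2 < q.2 :=
        lt_of_le_of_ne (le_trans hcon (min_le_right _ _)) (hgp' m q hmS hq hmqn).2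
      have hxp : m.1 < p.1 :=
        lt_of_le_of_ne (le_of_not_gt (fun h => claimA p hp hbp h hyp)) (hgp' m p hmS hp hmp).1
      have hxq : m.1 < q.1 :=
        lt_of_le_of_ne (le_of_not_gt (fun h => claimA q hq hbq h hyq)) (hgp' m q hmS hq hmqn).1
      have h4 := hwr.1
      have h5 : m.1 < min p.1 q.1 := lt_min hxp hxq
      linarith
    exact ⟨m, hmS, ⟨lt_of_lt_of_le hwr.1 hm1, ux, ly, lt_of_le_of_lt hm2 hwr.2.2.2⟩,
      nw_min_bsee B _ hmmin⟩
  · -- SE quadrant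
    obtain ⟨m, hmS, hm1, hm2, hmmin⟩ := exists_se_min B S hw hse
    have hmq : m ∈ B.SE := hmmin.1.2
    have claimA : ∀ r, r ∈ S → bsee (↑S : Set Pt) B r → m.1 < r.1 → r.2 < m.2 → False := by
      intro r hr hbr h1 h2
      have hrq : r ∈ B.SE := ⟨lt_trans hmq.1 h1, lt_trans h2 hmq.2⟩
      have hrmin := bsee_se_min B (↑S) hgp (Finset.mem_coe.mpr hr) hrq hbr
      have heq := hrmin.2 m ⟨Finset.mem_coe.mpr hmS, hmq⟩ ⟨h1.le, h2.le⟩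
      rw [heq] at h1; exact lt_irrefl _ h1
    have hmp : m ≠ p := by
      rintro rfl
      have h1 : m.1 < q.1 := by
        by_contra hcon; push_neg at hcon
        have h2 := hwr.2.1; rw [max_eq_left hcon] at h2; linarith
      have h2 : q.2 < m.2 := by
        by_contra hcon; push_neg at hcon
        have h3 := hwr.2.2.1; rw [min_eq_left hcon] at h3; linarith
      exact claimA q hq hbq h1 h2
    have hmqn : m ≠ q := by
      rintro rfl
      have h1 : m.1 < p.1 := by
        by_contra hcon; push_neg at hcon
        have h2 := hwr.2.1; rw [max_eq_right hcon] at h2; linarith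
      have h2 : p.2 < m.2 := by
        by_contra hcon; push_neg at hcon
        have h3 := hwr.2.2.1; rw [min_eq_right hcon] at h3; linarith
      exact claimA p hp hbp h1 h2
    have lx : min p.1 q.1 < m.1 := by
      by_contra hcon; push_neg at hcon
      have hxp : m.1 < p.1 :=
        lt_of_le_of_ne (le_trans hcon (min_le_left _ _)) (hgp' m p hmS hp hmp).1
      have hxq : m.1 < q.1 :=
        lt_of_le_of_ne (le_trans hcon (min_le_right _ _)) (hgp' m q hmS hq hmqn).1
      have hyp : m.2 < p.2 :=
        lt_of_le_of_ne (le_of_not_gt (fun h => claimA p hp hbp hxp h)) (hgp' m p hmS hp hmp).2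
      have hyq : m.2 < q.2 :=
        lt_of_le_of_ne (le_of_not_gt (fun h => claimA q hq hbq hxq h)) (hgp' m q hmS hq hmqn).2
      have h4 := hwr.2.2.1
      have h5 : m.2 < min p.2 q.2 := lt_min hyp hyq
      linarith
    have uy : m.2 < max p.2 q.2 := by
      by_contra hcon; push_neg at hcon
      have hyp : p.2 < m.2 :=
        lt_of_le_of_ne (le_trans (le_max_left _ _) hcon)
          (fun h => (hgp' m p hmS hp hmp).2 h.symm)
      have hyq : q.2 < m.2 :=
        lt_of_le_of_ne (le_trans (le_max_right _ _) hcon)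
          (fun h => (hgp' m q hmS hq hmqn).2 h.symm)
      have hxp : p.1 < m.1 :=
        lt_of_le_of_ne (le_of_not_gt (fun h => claimA p hp hbp h hyp))
          (fun h => (hgp' m p hmS hp hmp).1 h.symm)
      have hxq : q.1 < m.1 :=
        lt_of_le_of_ne (le_of_not_gt (fun h => claimA q hq hbq h hyq))
          (fun h => (hgp' m q hmS hq hmqn).1 h.symm)
      have h4 := hwr.2.1
      have h5 : max p.1 q.1 < m.1 := max_lt hxp hxq
      linarith
    exact ⟨m, hmS, ⟨lx, lt_of_le_of_lt hm1 hwr.2.1, lt_of_lt_of_le hwr.2.2.1 hm2, uy⟩,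
      se_min_bsee B _ hmmin⟩
  · -- SW quadrant
    obtain ⟨m, hmS, hm1, hm2, hmmin⟩ := exists_sw_min B S hw hsw
    have hmq : m ∈ B.SW := hmmin.1.2
    have claimA : ∀ r, r ∈ S → bsee (↑S : Set Pt) B r → r.1 < m.1 → r.2 < m.2 → False := by
      intro r hr hbr h1 h2
      have hrq : r ∈ B.SW := ⟨lt_trans h1 hmq.1, lt_trans h2 hmq.2⟩
      have hrmin := bsee_sw_min B (↑S) hgp (Finset.mem_coe.mpr hr) hrq hbr
      have heq := hrmin.2 m ⟨Finset.mem_coe.mpr hmS, hmq⟩ ⟨h1.le, h2.le⟩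
      rw [heq] at h1; exact lt_irrefl _ h1
    have hmp : m ≠ p := by
      rintro rfl
      have h1 : q.1 < m.1 := by
        by_contra hcon; push_neg at hcon
        have h2 := hwr.1; rw [min_eq_left hcon] at h2; linarith
      have h2 : q.2 < m.2 := by
        by_contra hcon; push_neg at hcon
        have h3 := hwr.2.2.1; rw [min_eq_left hcon] at h3; linarith
      exact claimA q hq hbq h1 h2
    have hmqn : m ≠ q := by
      rintro rfl
      have h1 : p.1 < m.1 := by
        by_contra hcon; push_neg at hcon
        have h2 := hwr.1; rw [min_eq_right hcon] at h2; linarith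
      have h2 : p.2 < m.2 := by
        by_contra hcon; push_neg at hcon
        have h3 := hwr.2.2.1; rw [min_eq_right hcon] at h3; linarith
      exact claimA p hp hbp h1 h2
    have ux : m.1 < max p.1 q.1 := by
      by_contra hcon; push_neg at hcon
      have hxp : p.1 < m.1 :=
        lt_of_le_of_ne (le_trans (le_max_left _ _) hcon)
          (fun h => (hgp' m p hmS hp hmp).1 h.symm)
      have hxq : q.1 < m.1 :=
        lt_of_le_of_ne (le_trans (le_max_right _ _) hcon)
          (fun h => (hgp' m q hmS hq hmqn).1 h.symm)
      have hyp : m.2 < p.2 :=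
        lt_of_le_of_ne (le_of_not_gt (fun h => claimA p hp hbp hxp h)) (hgp' m p hmS hp hmp).2
      have hyq : m.2 < q.2 :=
        lt_of_le_of_ne (le_of_not_gt (fun h => claimA q hq hbq hxq h)) (hgp' m q hmS hq hmqn).2
      have h4 := hwr.2.2.1
      have h5 : m.2 < min p.2 q.2 := lt_min hyp hyq
      linarith
    have uy : m.2 < max p.2 q.2 := by
      by_contra hcon; push_neg at hcon
      have hyp : p.2 < m.2 :=
        lt_of_le_of_ne (le_trans (le_max_left _ _) hcon)
          (fun h => (hgp' m p hmS hp hmp).2 h.symm)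
      have hyq : q.2 < m.2 :=
        lt_of_le_of_ne (le_trans (le_max_right _ _) hcon)
          (fun h => (hgp' m q hmS hq hmqn).2 h.symm)
      have hxp : m.1 < p.1 :=
        lt_of_le_of_ne (le_of_not_gt (fun h => claimA p hp hbp h hyp)) (hgp' m p hmS hp hmp).1
      have hxq : m.1 < q.1 :=
        lt_of_le_of_ne (le_of_not_gt (fun h => claimA q hq hbq h hyq)) (hgp' m q hmS hq hmqn).1
      have h4 := hwr.1
      have h5 : m.1 < min p.1 q.1 := lt_min hxp hxq
      linarith
    exact ⟨m, hmS, ⟨lt_of_lt_of_le hwr.1 hm1, ux, lt_of_lt_of_le hwr.2.2.1 hm2, uy⟩,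
      sw_min_bsee B _ hmmin⟩
lemma chain_bsee (B : Box) (S : Finset Pt) (hgp : genPos (↑S : Set Pt)) (color : Pt → Bool) :
    ∀ n : ℕ, ∀ p q : Pt, p ∈ S → q ∈ S → bsee (↑S : Set Pt) B p → bsee (↑S : Set Pt) B q →
      color p ≠ color q → (S.filter (fun z => openRect p q z)).card ≤ n →
      ∃ u, u ∈ S ∧ bsee (↑S : Set Pt) B u ∧ participates (↑S : Set Pt) color u ∧
        color u = color p := by
  intro n
  induction n with
  | zero =>
    intro p q hp hq hbp hbq hcol hcard
    have hemp : ∀ z ∈ S, ¬ openRect p q z := by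
      intro z hz hr
      have : z ∈ S.filter (fun z => openRect p q z) := Finset.mem_filter.mpr ⟨hz, hr⟩
      rw [Finset.card_eq_zero.mp (Nat.le_zero.mp hcard)] at this
      exact absurd this (Finset.notMem_empty z)
    exact ⟨p, hp, hbp,
      ⟨q, Finset.mem_coe.mpr hq, hcol.symm, fun z hz => hemp z (Finset.mem_coe.mp hz)⟩, rfl⟩
  | succ n ih =>
    intro p q hp hq hbp hbq hcol hcard
    by_cases hemp : ∀ z ∈ S, ¬ openRect p q z
    · exact ⟨p, hp, hbp,
        ⟨q, Finset.mem_coe.mpr hq, hcol.symm, fun z hz => hemp z (Finset.mem_coe.mp hz)⟩, rfl⟩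
    · push_neg at hemp
      obtain ⟨w, hwS, hwr0⟩ := hemp
      obtain ⟨z, hzS, hwr, hzb⟩ := exists_bsee_in_rect B S hgp hp hq hwS hbp hbq hwr0
      have hzmem : z ∈ S.filter (fun u => openRect p q u) := Finset.mem_filter.mpr ⟨hzS, hwr⟩
      by_cases hcz : color z = color p
      · -- recurse on (z, q)
        have hcol' : color z ≠ color q := by rw [hcz]; exact hcol
        have hsubf : S.filter (fun u => openRect z q u) ⊆
            (S.filter (fun u => openRect p q u)).erase z := by
          intro u hu
          obtain ⟨huS, hur⟩ := Finset.mem_filter.mp hu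
          refine Finset.mem_erase.mpr ⟨?_, Finset.mem_filter.mpr ⟨huS, openRect_trans' hwr hur⟩⟩
          rintro rfl
          exact not_openRect_left u q hur
        have hcard' : (S.filter (fun u => openRect z q u)).card ≤ n := by
          have := Finset.card_le_card hsubf
          rw [Finset.card_erase_of_mem hzmem] at this
          omega
        obtain ⟨u, h1, h2, h3, h4⟩ := ih z q hzS hq hzb hbq hcol' hcard'
        exact ⟨u, h1, h2, h3, h4.trans hcz⟩
      · -- recurse on (p, z)
        have hcol' : color p ≠ color z := fun h => hcz h.symm
        have hsubf : S.filter (fun u => openRect p z u) ⊆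
            (S.filter (fun u => openRect p q u)).erase z := by
          intro u hu
          obtain ⟨huS, hur⟩ := Finset.mem_filter.mp hu
          refine Finset.mem_erase.mpr ⟨?_, Finset.mem_filter.mpr ⟨huS, openRect_trans hwr hur⟩⟩
          rintro rfl
          exact not_openRect_right p u hur
        have hcard' : (S.filter (fun u => openRect p z u)).card ≤ n := by
          have := Finset.card_le_card hsubf
          rw [Finset.card_erase_of_mem hzmem] at this
          omega
        exact ih p z hp hzS hbp hzb hcol' hcard'
lemma helperH (B : Box) (S S' : Finset Pt) (hgp : genPos (↑S : Set Pt)) (hsub : S' ⊆ S)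
    {p : Pt} (hpS' : p ∈ S') (hb' : bsee (↑S' : Set Pt) B p) (hnb : ¬ bsee (↑S : Set Pt) B p) :
    ∃ m, m ∈ S ∧ bsee (↑S : Set Pt) B m ∧ (∀ u ∈ S', ¬ openRect m p u) ∧ m ∉ S' := by
  have hcoe : (↑S' : Set Pt) ⊆ (↑S : Set Pt) := Finset.coe_subset.mpr hsub
  have hgp2 : genPos (↑S' : Set Pt) := fun a ha b hb => hgp a (hcoe ha) b (hcoe hb)
  have hgp' : ∀ a b : Pt, a ∈ S → b ∈ S → a ≠ b → a.1 ≠ b.1 ∧ a.2 ≠ b.2 :=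
    fun a b ha hb => hgp a (Finset.mem_coe.mpr ha) b (Finset.mem_coe.mpr hb)
  have hpS : p ∈ S := hsub hpS'
  rcases region B p with hc | hq | hq | hq | hq
  · exact absurd (cross_bsee B _ p hc) hnb
  · -- NE
    have hpmin' : p ∈ neMinSet ((↑S' : Set Pt) ∩ B.NE) :=
      bsee_ne_min B _ hgp2 (Finset.mem_coe.mpr hpS') hq hb'
    have hpnmin : p ∉ neMinSet ((↑S : Set Pt) ∩ B.NE) := fun h => hnb (ne_min_bsee B _ h)
    have hblock : ¬ (∀ u ∈ ((↑S : Set Pt) ∩ B.NE), u.1 ≤ p.1 ∧ u.2 ≤ p.2 → u = p) :=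
      fun h => hpnmin ⟨⟨Finset.mem_coe.mpr hpS, hq⟩, h⟩
    push_neg at hblock
    obtain ⟨z, ⟨hzS, hzq⟩, ⟨l1, l2⟩, hzp⟩ := hblock
    obtain ⟨m, hmS, hm1, hm2, hmmin⟩ := exists_ne_min B S (Finset.mem_coe.mp hzS) hzq
    have hm1p : m.1 ≤ p.1 := le_trans hm1 l1
    have hm2p : m.2 ≤ p.2 := le_trans hm2 l2
    have hmp : m ≠ p := fun h => hpnmin (h ▸ hmmin)
    have s1 : m.1 < p.1 := lt_of_le_of_ne hm1p (hgp' m p hmS hpS hmp).1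
    have s2 : m.2 < p.2 := lt_of_le_of_ne hm2p (hgp' m p hmS hpS hmp).2
    refine ⟨m, hmS, ne_min_bsee B _ hmmin, ?_, ?_⟩
    · intro u huS' hr
      obtain ⟨a1, a2, a3, a4⟩ := hr
      rw [min_eq_left hm1p] at a1
      rw [max_eq_right hm1p] at a2
      rw [min_eq_left hm2p] at a3
      rw [max_eq_right hm2p] at a4
      have huq : u ∈ B.NE := ⟨lt_trans hmmin.1.2.1 a1, lt_trans hmmin.1.2.2 a3⟩
      have := hpmin'.2 u ⟨Finset.mem_coe.mpr huS', huq⟩ ⟨a2.le, a4.le⟩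
      rw [this] at a2; exact lt_irrefl _ a2
    · intro hmS'
      exact hmp (hpmin'.2 m ⟨Finset.mem_coe.mpr hmS', hmmin.1.2⟩ ⟨hm1p, hm2p⟩)
  · -- NW
    have hpmin' : p ∈ nwMinSet ((↑S' : Set Pt) ∩ B.NW) :=
      bsee_nw_min B _ hgp2 (Finset.mem_coe.mpr hpS') hq hb'
    have hpnmin : p ∉ nwMinSet ((↑S : Set Pt) ∩ B.NW) := fun h => hnb (nw_min_bsee B _ h)
    have hblock : ¬ (∀ u ∈ ((↑S : Set Pt) ∩ B.NW), p.1 ≤ u.1 ∧ u.2 ≤ p.2 → u = p) :=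
      fun h => hpnmin ⟨⟨Finset.mem_coe.mpr hpS, hq⟩, h⟩
    push_neg at hblock
    obtain ⟨z, ⟨hzS, hzq⟩, ⟨l1, l2⟩, hzp⟩ := hblock
    obtain ⟨m, hmS, hm1, hm2, hmmin⟩ := exists_nw_min B S (Finset.mem_coe.mp hzS) hzq
    have hm1p : p.1 ≤ m.1 := le_trans l1 hm1
    have hm2p : m.2 ≤ p.2 := le_trans hm2 l2
    have hmp : m ≠ p := fun h => hpnmin (h ▸ hmmin)
    have s1 : p.1 < m.1 := lt_of_le_of_ne hm1p (fun h => (hgp' m p hmS hpS hmp).1 h.symm)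
    have s2 : m.2 < p.2 := lt_of_le_of_ne hm2p (hgp' m p hmS hpS hmp).2
    refine ⟨m, hmS, nw_min_bsee B _ hmmin, ?_, ?_⟩
    · intro u huS' hr
      obtain ⟨a1, a2, a3, a4⟩ := hr
      rw [min_eq_right hm1p] at a1
      rw [max_eq_left hm1p] at a2
      rw [min_eq_left hm2p] at a3
      rw [max_eq_right hm2p] at a4
      have huq : u ∈ B.NW := ⟨lt_trans a2 hmmin.1.2.1, lt_trans hmmin.1.2.2 a3⟩
      have := hpmin'.2 u ⟨Finset.mem_coe.mpr huS', huq⟩ ⟨a1.le, a4.le⟩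
      rw [this] at a1; exact lt_irrefl _ a1
    · intro hmS'
      exact hmp (hpmin'.2 m ⟨Finset.mem_coe.mpr hmS', hmmin.1.2⟩ ⟨hm1p, hm2p⟩)
  · -- SE
    have hpmin' : p ∈ seMinSet ((↑S' : Set Pt) ∩ B.SE) :=
      bsee_se_min B _ hgp2 (Finset.mem_coe.mpr hpS') hq hb'
    have hpnmin : p ∉ seMinSet ((↑S : Set Pt) ∩ B.SE) := fun h => hnb (se_min_bsee B _ h)
    have hblock : ¬ (∀ u ∈ ((↑S : Set Pt) ∩ B.SE), u.1 ≤ p.1 ∧ p.2 ≤ u.2 → u = p) :=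
      fun h => hpnmin ⟨⟨Finset.mem_coe.mpr hpS, hq⟩, h⟩
    push_neg at hblock
    obtain ⟨z, ⟨hzS, hzq⟩, ⟨l1, l2⟩, hzp⟩ := hblock
    obtain ⟨m, hmS, hm1, hm2, hmmin⟩ := exists_se_min B S (Finset.mem_coe.mp hzS) hzq
    have hm1p : m.1 ≤ p.1 := le_trans hm1 l1
    have hm2p : p.2 ≤ m.2 := le_trans l2 hm2
    have hmp : m ≠ p := fun h => hpnmin (h ▸ hmmin)
    have s1 : m.1 < p.1 := lt_of_le_of_ne hm1p (hgp' m p hmS hpS hmp).1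
    have s2 : p.2 < m.2 := lt_of_le_of_ne hm2p (fun h => (hgp' m p hmS hpS hmp).2 h.symm)
    refine ⟨m, hmS, se_min_bsee B _ hmmin, ?_, ?_⟩
    · intro u huS' hr
      obtain ⟨a1, a2, a3, a4⟩ := hr
      rw [min_eq_left hm1p] at a1
      rw [max_eq_right hm1p] at a2
      rw [min_eq_right hm2p] at a3
      rw [max_eq_left hm2p] at a4
      have huq : u ∈ B.SE := ⟨lt_trans hmmin.1.2.1 a1, lt_trans a4 hmmin.1.2.2⟩
      have := hpmin'.2 u ⟨Finset.mem_coe.mpr huS', huq⟩ ⟨a2.le, a3.le⟩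
      rw [this] at a2; exact lt_irrefl _ a2
    · intro hmS'
      exact hmp (hpmin'.2 m ⟨Finset.mem_coe.mpr hmS', hmmin.1.2⟩ ⟨hm1p, hm2p⟩)
  · -- SW
    have hpmin' : p ∈ swMinSet ((↑S' : Set Pt) ∩ B.SW) :=
      bsee_sw_min B _ hgp2 (Finset.mem_coe.mpr hpS') hq hb'
    have hpnmin : p ∉ swMinSet ((↑S : Set Pt) ∩ B.SW) := fun h => hnb (sw_min_bsee B _ h)
    have hblock : ¬ (∀ u ∈ ((↑S : Set Pt) ∩ B.SW), p.1 ≤ u.1 ∧ p.2 ≤ u.2 → u = p) :=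
      fun h => hpnmin ⟨⟨Finset.mem_coe.mpr hpS, hq⟩, h⟩
    push_neg at hblock
    obtain ⟨z, ⟨hzS, hzq⟩, ⟨l1, l2⟩, hzp⟩ := hblock
    obtain ⟨m, hmS, hm1, hm2, hmmin⟩ := exists_sw_min B S (Finset.mem_coe.mp hzS) hzq
    have hm1p : p.1 ≤ m.1 := le_trans l1 hm1
    have hm2p : p.2 ≤ m.2 := le_trans l2 hm2
    have hmp : m ≠ p := fun h => hpnmin (h ▸ hmmin)
    have s1 : p.1 < m.1 := lt_of_le_of_ne hm1p (fun h => (hgp' m p hmS hpS hmp).1 h.symm)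
    have s2 : p.2 < m.2 := lt_of_le_of_ne hm2p (fun h => (hgp' m p hmS hpS hmp).2 h.symm)
    refine ⟨m, hmS, sw_min_bsee B _ hmmin, ?_, ?_⟩
    · intro u huS' hr
      obtain ⟨a1, a2, a3, a4⟩ := hr
      rw [min_eq_right hm1p] at a1
      rw [max_eq_left hm1p] at a2
      rw [min_eq_right hm2p] at a3
      rw [max_eq_left hm2p] at a4
      have huq : u ∈ B.SW := ⟨lt_trans a2 hmmin.1.2.1, lt_trans a4 hmmin.1.2.2⟩
      have := hpmin'.2 u ⟨Finset.mem_coe.mpr huS', huq⟩ ⟨a1.le, a3.le⟩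
      rw [this] at a1; exact lt_irrefl _ a1
    · intro hmS'
      exact hmp (hpmin'.2 m ⟨Finset.mem_coe.mpr hmS', hmmin.1.2⟩ ⟨hm1p, hm2p⟩)
/-- If `S'` conforms with `S` (contains all participating points), then a box is safe
for `S` iff it is safe for `S'`, and points of `S'` participate in `S` iff in `S'`. -/
theorem stmt8 (S S' : Finset Pt) (color : Pt → Bool) (hgp : genPos (↑S : Set Pt))
    (hsub : S' ⊆ S)
    (hconf : ∀ p ∈ S, participates (↑S : Set Pt) color p → p ∈ S')
    (B : Box) (hbd : ∀ q ∈ S, B.offBoundary q) :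
    (isSafe (↑S : Set Pt) color B ↔ isSafe (↑S' : Set Pt) color B) ∧
    (∀ p ∈ S', (participates (↑S : Set Pt) color p ↔ participates (↑S' : Set Pt) color p)) := by
  classical
  have hcoe : (↑S' : Set Pt) ⊆ (↑S : Set Pt) := Finset.coe_subset.mpr hsub
  have hgp2 : genPos (↑S' : Set Pt) := fun a ha b hb => hgp a (hcoe ha) b (hcoe hb)
  have hdir : ∀ c, safeFor (↑S : Set Pt) color c B → safeFor (↑S' : Set Pt) color c B := by
    intro c hs
    rw [safeFor_iff_bsee B S hgp color c] at hs
    rw [safeFor_iff_bsee B S' hgp2 color c]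
    intro p hpS' hb'
    by_cases hbS : bsee (↑S : Set Pt) B p
    · exact hs p (hsub hpS') hbS
    · obtain ⟨m, hmS, hbm, hfree, hmnS'⟩ := helperH B S S' hgp hsub hpS' hb' hbS
      by_contra hpc
      have hcm : color m = c := hs m hmS hbm
      have hne : color m ≠ color p := by rw [hcm]; exact fun h => hpc h.symm
      have hpart : participates (↑S : Set Pt) color m :=
        key_participates S S' color hconf ((S.filter (fun z => openRect m p z)).card)
          m p hmS (hsub hpS') hne hfree (le_refl _)
      exact hmnS' (hconf m hmS hpart)
  have hrev : isSafe (↑S' : Set Pt) color B → isSafe (↑S : Set Pt) color B := by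
    intro hs
    by_contra hns
    have h1 : ¬ safeFor (↑S : Set Pt) color true B := fun h => hns (Or.inl h)
    have h2 : ¬ safeFor (↑S : Set Pt) color false B := fun h => hns (Or.inr h)
    rw [safeFor_iff_bsee B S hgp color true] at h1
    rw [safeFor_iff_bsee B S hgp color false] at h2
    push_neg at h1 h2
    obtain ⟨p, hpS, hbp, hcp⟩ := h1
    obtain ⟨q, hqS, hbq, hcq⟩ := h2
    have hcp' : color p = false := by simpa using hcp
    have hcq' : color q = true := by simpa using hcq
    have hcolne : color p ≠ color q := by rw [hcp', hcq']; simp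
    obtain ⟨u, huS, hbu, hpu, hcu⟩ :=
      chain_bsee B S hgp color ((S.filter (fun z => openRect p q z)).card)
        p q hpS hqS hbp hbq hcolne (le_refl _)
    obtain ⟨v, hvS, hbv, hpv, hcv⟩ :=
      chain_bsee B S hgp color ((S.filter (fun z => openRect q p z)).card)
        q p hqS hpS hbq hbp (Ne.symm hcolne) (le_refl _)
    have huS' : u ∈ S' := hconf u huS hpu
    have hvS' : v ∈ S' := hconf v hvS hpv
    have hbu' : bsee (↑S' : Set Pt) B u := bsee_mono hcoe hbu
    have hbv' : bsee (↑S' : Set Pt) B v := bsee_mono hcoe hbv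
    rcases hs with hc | hc
    · rw [safeFor_iff_bsee B S' hgp2 color true] at hc
      have := hc u huS' hbu'
      rw [hcu, hcp'] at this
      exact absurd this (by simp)
    · rw [safeFor_iff_bsee B S' hgp2 color false] at hc
      have := hc v hvS' hbv'
      rw [hcv, hcq'] at this
      exact absurd this (by simp)
  constructor
  · constructor
    · rintro (h | h)
      · exact Or.inl (hdir true h)
      · exact Or.inr (hdir false h)
    · exact hrev
  · intro p hpS'
    constructor
    · rintro ⟨q, hqS, hcq, hsee⟩
      have hqS'' : q ∈ S' :=
        hconf q (Finset.mem_coe.mp hqS)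
          ⟨p, Finset.mem_coe.mpr (hsub hpS'), Ne.symm hcq,
            fun z hz hr => hsee z hz ((openRect_comm q p z).mp hr)⟩
      exact ⟨q, Finset.mem_coe.mpr hqS'', hcq, fun z hz => hsee z (hcoe hz)⟩
    · rintro ⟨q, hqS', hcq, hsee⟩
      exact key_participates S S' color hconf ((S.filter (fun z => openRect p q z)).card)
        p q (hsub hpS') (hsub (Finset.mem_coe.mp hqS')) (Ne.symm hcq)
        (fun u hu => hsee u (Finset.mem_coe.mpr hu)) (le_refl _)
end
end

section
/- For every real number x ≥ 1 and natural number n ≥ 1 with x ≤ n: the sum Σ_{j ≥ 0} min{s, n/2^{j/2}} over integers j, where s = n/x, satisfies Σ_j min{s, n/2^{j/2}} (summed for j from 0 to 2·log₂ n) ≤ C · s · (log₂(n/s) + 1) for some absolute constant C. -/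
open Classical

lemma geom_range_le {r : ℝ} (h0 : 0 ≤ r) (h1 : r < 1) (k : ℕ) :
    ∑ j ∈ Finset.range k, r ^ j ≤ (1 - r)⁻¹ := by
  calc ∑ j ∈ Finset.range k, r ^ j
      ≤ ∑' j : ℕ, r ^ j :=
        Summable.sum_le_tsum _ (fun i _ => pow_nonneg h0 i)
          (summable_geometric_of_lt_one h0 h1)
    _ = (1 - r)⁻¹ := tsum_geometric_of_lt_one h0 h1

/-- Summation estimate: with `s = n/x`,
`Σ_{j=0}^{2 log₂ n} min(s, n/2^{j/2}) ≤ C·s·(log₂(n/s)+1)` for an absolute constant. -/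
theorem stmt9 : ∃ C : ℝ, 0 < C ∧
    ∀ (n : ℕ) (x : ℝ), 1 ≤ n → 1 ≤ x → x ≤ (n : ℝ) →
      (∑ j ∈ Finset.range (⌊2 * Real.logb 2 (n : ℝ)⌋₊ + 1),
          min ((n : ℝ) / x) ((n : ℝ) / (2 : ℝ) ^ ((j : ℝ) / 2)))
        ≤ C * ((n : ℝ) / x) * (Real.logb 2 x + 1) := by
  refine ⟨6, by norm_num, ?_⟩
  intro n x hn hx hxn
  have hn1 : (1 : ℝ) ≤ n := by exact_mod_cast hn
  have hx0 : (0 : ℝ) < x := lt_of_lt_of_le one_pos hx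
  set s : ℝ := (n : ℝ) / x with hs
  have hs0 : 0 ≤ s := div_nonneg (by linarith) hx0.le
  set L : ℝ := Real.logb 2 x with hLdef
  have hL0 : 0 ≤ L := Real.logb_nonneg (by norm_num) hx
  set K : ℕ := ⌈2 * L⌉₊ with hK
  set N : ℕ := ⌊2 * Real.logb 2 (n : ℝ)⌋₊ + 1 with hN
  set r : ℝ := (2 : ℝ) ^ (-(1/2) : ℝ) with hr
  have hr0 : 0 < r := Real.rpow_pos_of_pos (by norm_num) _
  have hr1 : r < 1 := Real.rpow_lt_one_of_one_lt_of_neg (by norm_num) (by norm_num)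
  -- term rewrite
  have hterm : ∀ j : ℕ, (n : ℝ) / (2 : ℝ) ^ ((j : ℝ) / 2) = (n : ℝ) * r ^ j := by
    intro j
    rw [hr, ← Real.rpow_natCast ((2:ℝ) ^ (-(1/2):ℝ)) j, ← Real.rpow_mul (by norm_num)]
    rw [show (-(1/2) : ℝ) * j = -(j/2) by ring, Real.rpow_neg (by norm_num)]
    rw [div_eq_mul_inv]
  -- r ≤ 3/4
  have hrr : r * r = 1/2 := by
    rw [hr, ← Real.rpow_add (by norm_num : (0:ℝ) < 2)]
    rw [show (-(1/2) + -(1/2) : ℝ) = -1 by ring, Real.rpow_neg_one]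
    norm_num
  have hr34 : r ≤ 3/4 := by nlinarith [hr0.le]
  -- n * r^K ≤ s
  have hnrK : (n : ℝ) * r ^ K ≤ s := by
    have hxL : x = (2 : ℝ) ^ L := (Real.rpow_logb (by norm_num) (by norm_num) hx0).symm
    have hKL : 2 * L ≤ (K : ℝ) := Nat.le_ceil _
    have hrK : r ^ K = (2 : ℝ) ^ (-(K : ℝ)/2) := by
      rw [hr, ← Real.rpow_natCast ((2:ℝ) ^ (-(1/2):ℝ)) K, ← Real.rpow_mul (by norm_num)]
      ring_nf
    have hle : (2 : ℝ) ^ (-(K : ℝ)/2) ≤ (2 : ℝ) ^ (-L) :=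
      Real.rpow_le_rpow_of_exponent_le (by norm_num) (by linarith)
    calc (n : ℝ) * r ^ K ≤ (n : ℝ) * (2 : ℝ) ^ (-L) := by
          rw [hrK]; exact mul_le_mul_of_nonneg_left hle (by linarith)
      _ = s := by
          rw [hs, Real.rpow_neg (by norm_num), hxL, div_eq_mul_inv]
  -- split sum
  set f : ℕ → ℝ := fun j => min s ((n : ℝ) / (2 : ℝ) ^ ((j : ℝ) / 2)) with hf
  have hsplit := (Finset.sum_filter_add_sum_filter_not (Finset.range N)
    (fun j => j ≤ K) f).symm
  have h1 : ∑ j ∈ (Finset.range N).filter (fun j => j ≤ K), f j ≤ (K + 1 : ℝ) * s := by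
    calc ∑ j ∈ (Finset.range N).filter (fun j => j ≤ K), f j
        ≤ ∑ _j ∈ (Finset.range N).filter (fun j => j ≤ K), s :=
          Finset.sum_le_sum (fun j _ => min_le_left _ _)
      _ = ((Finset.range N).filter (fun j => j ≤ K)).card * s := by
          rw [Finset.sum_const, nsmul_eq_mul]
      _ ≤ (K + 1 : ℝ) * s := by
          apply mul_le_mul_of_nonneg_right _ hs0
          have : ((Finset.range N).filter (fun j => j ≤ K)).card ≤ K + 1 := by
            have hsub : (Finset.range N).filter (fun j => j ≤ K) ⊆
                Finset.range (K + 1) := by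
              intro j hj
              simp only [Finset.mem_filter, Finset.mem_range] at hj ⊢
              omega
            simpa using Finset.card_le_card hsub
          exact_mod_cast this
  have h2 : ∑ j ∈ (Finset.range N).filter (fun j => ¬ j ≤ K), f j ≤ 3 * s := by
    have step1 : ∑ j ∈ (Finset.range N).filter (fun j => ¬ j ≤ K), f j
        ≤ ∑ j ∈ (Finset.range N).filter (fun j => ¬ j ≤ K), (n : ℝ) * r ^ j := by
      apply Finset.sum_le_sum
      intro j _
      rw [hf]
      exact (min_le_right _ _).trans_eq (hterm j)
    have step2 : ∑ j ∈ (Finset.range N).filter (fun j => ¬ j ≤ K), (n : ℝ) * r ^ j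
        ≤ ∑ j ∈ Finset.Ico (K+1) (N + K + 1), (n : ℝ) * r ^ j := by
      apply Finset.sum_le_sum_of_subset_of_nonneg
      · intro j hj
        simp only [Finset.mem_filter, Finset.mem_range] at hj
        simp only [Finset.mem_Ico]
        omega
      · intro j _ _
        positivity
    have step3 : ∑ j ∈ Finset.Ico (K+1) (N + K + 1), (n : ℝ) * r ^ j
        ≤ (n : ℝ) * r ^ (K+1) * (1 - r)⁻¹ := by
      have heq : ∑ j ∈ Finset.Ico (K+1) (N + K + 1), (n : ℝ) * r ^ j
          = (n : ℝ) * r ^ (K+1) * ∑ j ∈ Finset.range (N + K + 1 - (K+1)), r ^ j := by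
        rw [Finset.sum_Ico_eq_sum_range, Finset.mul_sum]
        apply Finset.sum_congr rfl
        intro j _
        rw [pow_add]; ring
      rw [heq]
      apply mul_le_mul_of_nonneg_left (geom_range_le hr0.le hr1 _)
      positivity
    have step4 : (n : ℝ) * r ^ (K+1) * (1 - r)⁻¹ ≤ 3 * s := by
      have h1r : 0 < 1 - r := by linarith
      have hfrac : r * (1 - r)⁻¹ ≤ 3 := by
        rw [← div_eq_mul_inv, div_le_iff₀ h1r]; linarith
      calc (n : ℝ) * r ^ (K+1) * (1 - r)⁻¹
          = ((n : ℝ) * r ^ K) * (r * (1 - r)⁻¹) := by rw [pow_succ]; ring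
        _ ≤ s * 3 := mul_le_mul hnrK hfrac (by positivity) hs0
        _ = 3 * s := mul_comm _ _
    linarith [step1, step2, step3, step4]
  -- combine
  have hKle : (K : ℝ) ≤ 2 * L + 1 := by
    have := Nat.ceil_lt_add_one (by positivity : (0:ℝ) ≤ 2 * L)
    linarith
  calc (∑ j ∈ Finset.range N, f j)
      = _ + _ := hsplit
    _ ≤ (K + 1 : ℝ) * s + 3 * s := add_le_add h1 h2
    _ ≤ 6 * s * (L + 1) := by nlinarith
end

section
/- Let S be a set of n red/blue points in the plane with distinct x and y coordinates, and let h ≥ 2 be the number of points participating in S. Then the structural entropy satisfies n·(H(S)+1) ≤ C·n·log h for an absolute constant C, i.e., n(H(S)+1) ∈ O(n log h). -/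
open Classical

noncomputable section

/-- `Prt` is a partition of the finite point set `S`. -/
def isPartition (S : Finset Pt) (Prt : Finset (Finset Pt)) : Prop :=
  (∀ C ∈ Prt, C ⊆ S ∧ C.Nonempty) ∧ (∀ p ∈ S, ∃! C, C ∈ Prt ∧ p ∈ C)

/-- A respectful partition: every part is a singleton or enclosed in a safe box. -/
def respectful (S : Finset Pt) (color : Pt → Bool) (Prt : Finset (Finset Pt)) : Prop :=
  ∀ C ∈ Prt, C.card = 1 ∨
    ∃ B : Box, (∀ q ∈ S, B.offBoundary q) ∧ isSafe (↑S) color B ∧ ∀ q ∈ C, B.inside q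

/-- Entropy of a partition of an `n`-point set (logarithms base 2). -/
def partitionEntropy (n : ℕ) (Prt : Finset (Finset Pt)) : ℝ :=
  ∑ C ∈ Prt, ((C.card : ℝ) / n) * Real.logb 2 ((n : ℝ) / (C.card : ℝ))

/-- Structural entropy: infimum of entropies of respectful partitions. -/
def structEntropy (S : Finset Pt) (color : Pt → Bool) : ℝ :=
  sInf {x : ℝ | ∃ Prt : Finset (Finset Pt),
    isPartition S Prt ∧ respectful S color Prt ∧ x = partitionEntropy S.card Prt}

namespace Stmt10Aux

open Finset

lemma openRect_comm {p q z : Pt} : openRect p q z ↔ openRect q p z := by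
  unfold openRect
  rw [min_comm q.1 p.1, max_comm q.1 p.1, min_comm q.2 p.2, max_comm q.2 p.2]

lemma sees_symm {S : Set Pt} {p q : Pt} (h : sees S p q) : sees S q p :=
  fun z hz hr => h z hz (openRect_comm.mpr hr)

lemma betw_abs {a b c : ℝ} (h1 : min a b < c) (h2 : c < max a b) :
    |a - c| < |a - b| ∧ |c - b| < |a - b| := by
  rcases le_total a b with h | h
  · rw [min_eq_left h] at h1; rw [max_eq_right h] at h2
    rw [abs_of_nonpos (by linarith), abs_of_nonpos (by linarith), abs_of_neg (by linarith)]
    constructor <;> linarith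
  · rw [min_eq_right h] at h1; rw [max_eq_left h] at h2
    rw [abs_of_nonneg (by linarith), abs_of_pos (by linarith), abs_of_pos (by linarith)]
    constructor <;> linarith

/-- All points of `S` in a vertical strip free of participating x-coordinates share a color. -/
lemma vstrip_mono (S : Finset Pt) (color : Pt → Bool) (x0 x1 : ℝ)
    (hP : ∀ q ∈ S, participates (↑S) color q → ¬(x0 ≤ q.1 ∧ q.1 ≤ x1))
    {a b : Pt} (ha : a ∈ S) (hb : b ∈ S)
    (ha0 : x0 ≤ a.1) (ha1 : a.1 ≤ x1) (hb0 : x0 ≤ b.1) (hb1 : b.1 ≤ x1) :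
    color a = color b := by
  classical
  by_contra hne
  set T := S.filter (fun p => x0 ≤ p.1 ∧ p.1 ≤ x1) with hT
  have haT : a ∈ T := by simp [hT, ha, ha0, ha1]
  have hbT : b ∈ T := by simp [hT, hb, hb0, hb1]
  set Pr := (T ×ˢ T).filter (fun pq => color pq.1 ≠ color pq.2) with hPr
  have hne' : Pr.Nonempty := ⟨(a, b), by simp [hPr, haT, hbT, hne]⟩
  obtain ⟨⟨u, v⟩, huv, hmin⟩ := Pr.exists_min_image (fun pq => |pq.1.2 - pq.2.2|) hne'
  rw [hPr, Finset.mem_filter, Finset.mem_product] at huv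
  obtain ⟨⟨huT, hvT⟩, hcuv⟩ := huv
  have huS : u ∈ S := (Finset.mem_filter.mp huT).1
  have hvS : v ∈ S := (Finset.mem_filter.mp hvT).1
  have hu1 := (Finset.mem_filter.mp huT).2
  have hv1 := (Finset.mem_filter.mp hvT).2
  have hsee : sees (↑S) u v := by
    intro z hz hr
    obtain ⟨hz1, hz2, hz3, hz4⟩ := hr
    have hzS : z ∈ S := hz
    have hzx0 : x0 ≤ z.1 := le_trans (le_min hu1.1 hv1.1) (le_of_lt hz1)
    have hzx1 : z.1 ≤ x1 := le_trans (le_of_lt hz2) (max_le hu1.2 hv1.2)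
    have hzT : z ∈ T := by simp [hT, hzS, hzx0, hzx1]
    have habs := betw_abs hz3 hz4
    by_cases hc : color z = color u
    · have hmem : ((z, v) : Pt × Pt) ∈ Pr := by
        rw [hPr, Finset.mem_filter, Finset.mem_product]
        exact ⟨⟨hzT, hvT⟩, by simpa [hc] using hcuv⟩
      have := hmin _ hmem
      simp only at this
      linarith [habs.2]
    · have hmem : ((u, z) : Pt × Pt) ∈ Pr := by
        rw [hPr, Finset.mem_filter, Finset.mem_product]
        exact ⟨⟨huT, hzT⟩, fun h => hc h.symm⟩
      have := hmin _ hmem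
      simp only at this
      linarith [habs.1]
  exact hP u huS ⟨v, Finset.mem_coe.mpr hvS, Ne.symm hcuv, hsee⟩ ⟨hu1.1, hu1.2⟩

/-- Horizontal version. -/
lemma hstrip_mono (S : Finset Pt) (color : Pt → Bool) (y0 y1 : ℝ)
    (hP : ∀ q ∈ S, participates (↑S) color q → ¬(y0 ≤ q.2 ∧ q.2 ≤ y1))
    {a b : Pt} (ha : a ∈ S) (hb : b ∈ S)
    (ha0 : y0 ≤ a.2) (ha1 : a.2 ≤ y1) (hb0 : y0 ≤ b.2) (hb1 : b.2 ≤ y1) :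
    color a = color b := by
  classical
  by_contra hne
  set T := S.filter (fun p => y0 ≤ p.2 ∧ p.2 ≤ y1) with hT
  have haT : a ∈ T := by simp [hT, ha, ha0, ha1]
  have hbT : b ∈ T := by simp [hT, hb, hb0, hb1]
  set Pr := (T ×ˢ T).filter (fun pq => color pq.1 ≠ color pq.2) with hPr
  have hne' : Pr.Nonempty := ⟨(a, b), by simp [hPr, haT, hbT, hne]⟩
  obtain ⟨⟨u, v⟩, huv, hmin⟩ := Pr.exists_min_image (fun pq => |pq.1.1 - pq.2.1|) hne'
  rw [hPr, Finset.mem_filter, Finset.mem_product] at huv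
  obtain ⟨⟨huT, hvT⟩, hcuv⟩ := huv
  have huS : u ∈ S := (Finset.mem_filter.mp huT).1
  have hvS : v ∈ S := (Finset.mem_filter.mp hvT).1
  have hu1 := (Finset.mem_filter.mp huT).2
  have hv1 := (Finset.mem_filter.mp hvT).2
  have hsee : sees (↑S) u v := by
    intro z hz hr
    obtain ⟨hz1, hz2, hz3, hz4⟩ := hr
    have hzS : z ∈ S := hz
    have hzy0 : y0 ≤ z.2 := le_trans (le_min hu1.1 hv1.1) (le_of_lt hz3)
    have hzy1 : z.2 ≤ y1 := le_trans (le_of_lt hz4) (max_le hu1.2 hv1.2)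
    have hzT : z ∈ T := by simp [hT, hzS, hzy0, hzy1]
    have habs := betw_abs hz1 hz2
    by_cases hc : color z = color u
    · have hmem : ((z, v) : Pt × Pt) ∈ Pr := by
        rw [hPr, Finset.mem_filter, Finset.mem_product]
        exact ⟨⟨hzT, hvT⟩, by simpa [hc] using hcuv⟩
      have := hmin _ hmem
      simp only at this
      linarith [habs.2]
    · have hmem : ((u, z) : Pt × Pt) ∈ Pr := by
        rw [hPr, Finset.mem_filter, Finset.mem_product]
        exact ⟨⟨huT, hzT⟩, fun h => hc h.symm⟩
      have := hmin _ hmem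
      simp only at this
      linarith [habs.1]
  exact hP u huS ⟨v, Finset.mem_coe.mpr hvS, Ne.symm hcuv, hsee⟩ ⟨hu1.1, hu1.2⟩

section Quad

variable (S : Finset Pt) (color : Pt → Bool) (B : Box)

/-- The hypothesis that no participating point has a coordinate in the strips of `B`. -/
def NoPartStrip : Prop := ∀ q ∈ S, participates (↑S) color q →
  ¬(B.x0 ≤ q.1 ∧ q.1 ≤ B.x1) ∧ ¬(B.y0 ≤ q.2 ∧ q.2 ≤ B.y1)

variable {S color B}

lemma cross_color (hP : NoPartStrip S color B) {w z : Pt} (hw : w ∈ S) (hwin : B.inside w)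
    (hz : z ∈ S) (hcr : (B.x0 ≤ z.1 ∧ z.1 ≤ B.x1) ∨ (B.y0 ≤ z.2 ∧ z.2 ≤ B.y1)) :
    color z = color w := by
  obtain ⟨hw1, hw2, hw3, hw4⟩ := hwin
  rcases hcr with h | h
  · exact vstrip_mono S color B.x0 B.x1 (fun q hq hpq => (hP q hq hpq).1) hz hw
      h.1 h.2 hw1.le hw2.le
  · exact hstrip_mono S color B.y0 B.y1 (fun q hq hpq => (hP q hq hpq).2) hz hw
      h.1 h.2 hw3.le hw4.le

lemma quad_ne (hgen : genPos ↑S) (hP : NoPartStrip S color B)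
    {w : Pt} (hw : w ∈ S) (hwin : B.inside w)
    {p : Pt} (hp : p ∈ neMinSet (↑S ∩ B.NE)) : color p = color w := by
  classical
  obtain ⟨⟨hpS, hpx, hpy⟩, hmin⟩ := hp
  by_contra hne
  obtain ⟨hw1, hw2, hw3, hw4⟩ := hwin
  set R := S.filter (fun z => B.x0 < z.1 ∧ z.1 ≤ p.1 ∧ B.y0 < z.2 ∧ z.2 ≤ p.2 ∧ z ≠ p)
    with hR
  have hwR : w ∈ R := Finset.mem_filter.mpr
    ⟨hw, hw1, by linarith, hw3, by linarith, fun h => hne (by rw [h])⟩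
  have hstrip : ∀ z ∈ R, (B.x0 ≤ z.1 ∧ z.1 ≤ B.x1) ∨ (B.y0 ≤ z.2 ∧ z.2 ≤ B.y1) := by
    intro z hz
    obtain ⟨hzS, hz1, hz2, hz3, hz4, hz5⟩ := Finset.mem_filter.mp hz
    by_contra hcon
    push_neg at hcon
    have hx1 : B.x1 < z.1 := hcon.1 hz1.le
    have hy1 : B.y1 < z.2 := hcon.2 hz3.le
    exact hz5 (hmin z ⟨Finset.mem_coe.mpr hzS, hx1, hy1⟩ ⟨hz2, hz4⟩)
  have hcolR : ∀ z ∈ R, color z = color w := fun z hz =>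
    cross_color hP hw ⟨hw1, hw2, hw3, hw4⟩ (Finset.mem_filter.mp hz).1 (hstrip z hz)
  obtain ⟨q, hqR, hqmax⟩ := R.exists_max_image (fun z => z.1 + z.2) ⟨w, hwR⟩
  obtain ⟨hqS, hq1, hq2, hq3, hq4, hq5⟩ := Finset.mem_filter.mp hqR
  have hqx : q.1 < p.1 := lt_of_le_of_ne hq2
    (fun h => hq5 (False.elim ((hgen q (Finset.mem_coe.mpr hqS) p hpS hq5).1 h)))
  have hqy : q.2 < p.2 := lt_of_le_of_ne hq4
    (fun h => hq5 (False.elim ((hgen q (Finset.mem_coe.mpr hqS) p hpS hq5).2 h)))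
  have hsee : sees (↑S) p q := by
    intro z hz hr
    rw [openRect, min_eq_right hqx.le, max_eq_left hqx.le,
      min_eq_right hqy.le, max_eq_left hqy.le] at hr
    obtain ⟨h1, h2, h3, h4⟩ := hr
    have hzS : z ∈ S := hz
    have hzR : z ∈ R := Finset.mem_filter.mpr
      ⟨hzS, by linarith, h2.le, by linarith, h4.le, fun h => by rw [h] at h2; linarith⟩
    have := hqmax z hzR
    linarith
  have hqpart : participates (↑S) color q :=
    ⟨p, hpS, by rw [hcolR q hqR]; exact hne, sees_symm hsee⟩
  rcases hstrip q hqR with h | h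
  · exact (hP q hqS hqpart).1 h
  · exact (hP q hqS hqpart).2 h

lemma quad_nw (hgen : genPos ↑S) (hP : NoPartStrip S color B)
    {w : Pt} (hw : w ∈ S) (hwin : B.inside w)
    {p : Pt} (hp : p ∈ nwMinSet (↑S ∩ B.NW)) : color p = color w := by
  classical
  obtain ⟨⟨hpS, hpx, hpy⟩, hmin⟩ := hp
  by_contra hne
  obtain ⟨hw1, hw2, hw3, hw4⟩ := hwin
  set R := S.filter (fun z => p.1 ≤ z.1 ∧ z.1 < B.x1 ∧ B.y0 < z.2 ∧ z.2 ≤ p.2 ∧ z ≠ p)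
    with hR
  have hwR : w ∈ R := Finset.mem_filter.mpr
    ⟨hw, by linarith, hw2, hw3, by linarith, fun h => hne (by rw [h])⟩
  have hstrip : ∀ z ∈ R, (B.x0 ≤ z.1 ∧ z.1 ≤ B.x1) ∨ (B.y0 ≤ z.2 ∧ z.2 ≤ B.y1) := by
    intro z hz
    obtain ⟨hzS, hz1, hz2, hz3, hz4, hz5⟩ := Finset.mem_filter.mp hz
    by_contra hcon
    push_neg at hcon
    have hx : z.1 < B.x0 := by
      by_contra hxx
      push_neg at hxx
      linarith [hcon.1 hxx]
    have hy : B.y1 < z.2 := hcon.2 hz3.le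
    exact hz5 (hmin z ⟨Finset.mem_coe.mpr hzS, hx, hy⟩ ⟨hz1, hz4⟩)
  have hcolR : ∀ z ∈ R, color z = color w := fun z hz =>
    cross_color hP hw ⟨hw1, hw2, hw3, hw4⟩ (Finset.mem_filter.mp hz).1 (hstrip z hz)
  obtain ⟨q, hqR, hqmax⟩ := R.exists_max_image (fun z => z.2 - z.1) ⟨w, hwR⟩
  obtain ⟨hqS, hq1, hq2, hq3, hq4, hq5⟩ := Finset.mem_filter.mp hqR
  have hqx : p.1 < q.1 := lt_of_le_of_ne hq1
    (fun h => hq5 (False.elim ((hgen q (Finset.mem_coe.mpr hqS) p hpS hq5).1 h.symm)))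
  have hqy : q.2 < p.2 := lt_of_le_of_ne hq4
    (fun h => hq5 (False.elim ((hgen q (Finset.mem_coe.mpr hqS) p hpS hq5).2 h)))
  have hsee : sees (↑S) p q := by
    intro z hz hr
    rw [openRect, min_eq_left hqx.le, max_eq_right hqx.le,
      min_eq_right hqy.le, max_eq_left hqy.le] at hr
    obtain ⟨h1, h2, h3, h4⟩ := hr
    have hzS : z ∈ S := hz
    have hzR : z ∈ R := Finset.mem_filter.mpr
      ⟨hzS, h1.le, by linarith, by linarith, h4.le, fun h => by rw [h] at h1; linarith⟩
    have := hqmax z hzR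
    linarith
  have hqpart : participates (↑S) color q :=
    ⟨p, hpS, by rw [hcolR q hqR]; exact hne, sees_symm hsee⟩
  rcases hstrip q hqR with h | h
  · exact (hP q hqS hqpart).1 h
  · exact (hP q hqS hqpart).2 h

lemma quad_se (hgen : genPos ↑S) (hP : NoPartStrip S color B)
    {w : Pt} (hw : w ∈ S) (hwin : B.inside w)
    {p : Pt} (hp : p ∈ seMinSet (↑S ∩ B.SE)) : color p = color w := by
  classical
  obtain ⟨⟨hpS, hpx, hpy⟩, hmin⟩ := hp
  by_contra hne
  obtain ⟨hw1, hw2, hw3, hw4⟩ := hwin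
  set R := S.filter (fun z => B.x0 < z.1 ∧ z.1 ≤ p.1 ∧ p.2 ≤ z.2 ∧ z.2 < B.y1 ∧ z ≠ p)
    with hR
  have hwR : w ∈ R := Finset.mem_filter.mpr
    ⟨hw, hw1, by linarith, by linarith, hw4, fun h => hne (by rw [h])⟩
  have hstrip : ∀ z ∈ R, (B.x0 ≤ z.1 ∧ z.1 ≤ B.x1) ∨ (B.y0 ≤ z.2 ∧ z.2 ≤ B.y1) := by
    intro z hz
    obtain ⟨hzS, hz1, hz2, hz3, hz4, hz5⟩ := Finset.mem_filter.mp hz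
    by_contra hcon
    push_neg at hcon
    have hx : B.x1 < z.1 := hcon.1 hz1.le
    have hy : z.2 < B.y0 := by
      by_contra hyy
      push_neg at hyy
      linarith [hcon.2 hyy]
    exact hz5 (hmin z ⟨Finset.mem_coe.mpr hzS, hx, hy⟩ ⟨hz2, hz3⟩)
  have hcolR : ∀ z ∈ R, color z = color w := fun z hz =>
    cross_color hP hw ⟨hw1, hw2, hw3, hw4⟩ (Finset.mem_filter.mp hz).1 (hstrip z hz)
  obtain ⟨q, hqR, hqmax⟩ := R.exists_max_image (fun z => z.1 - z.2) ⟨w, hwR⟩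
  obtain ⟨hqS, hq1, hq2, hq3, hq4, hq5⟩ := Finset.mem_filter.mp hqR
  have hqx : q.1 < p.1 := lt_of_le_of_ne hq2
    (fun h => hq5 (False.elim ((hgen q (Finset.mem_coe.mpr hqS) p hpS hq5).1 h)))
  have hqy : p.2 < q.2 := lt_of_le_of_ne hq3
    (fun h => hq5 (False.elim ((hgen q (Finset.mem_coe.mpr hqS) p hpS hq5).2 h.symm)))
  have hsee : sees (↑S) p q := by
    intro z hz hr
    rw [openRect, min_eq_right hqx.le, max_eq_left hqx.le,
      min_eq_left hqy.le, max_eq_right hqy.le] at hr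
    obtain ⟨h1, h2, h3, h4⟩ := hr
    have hzS : z ∈ S := hz
    have hzR : z ∈ R := Finset.mem_filter.mpr
      ⟨hzS, by linarith, h2.le, h3.le, by linarith, fun h => by rw [h] at h2; linarith⟩
    have := hqmax z hzR
    linarith
  have hqpart : participates (↑S) color q :=
    ⟨p, hpS, by rw [hcolR q hqR]; exact hne, sees_symm hsee⟩
  rcases hstrip q hqR with h | h
  · exact (hP q hqS hqpart).1 h
  · exact (hP q hqS hqpart).2 h

lemma quad_sw (hgen : genPos ↑S) (hP : NoPartStrip S color B)
    {w : Pt} (hw : w ∈ S) (hwin : B.inside w)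
    {p : Pt} (hp : p ∈ swMinSet (↑S ∩ B.SW)) : color p = color w := by
  classical
  obtain ⟨⟨hpS, hpx, hpy⟩, hmin⟩ := hp
  by_contra hne
  obtain ⟨hw1, hw2, hw3, hw4⟩ := hwin
  set R := S.filter (fun z => p.1 ≤ z.1 ∧ z.1 < B.x1 ∧ p.2 ≤ z.2 ∧ z.2 < B.y1 ∧ z ≠ p)
    with hR
  have hwR : w ∈ R := Finset.mem_filter.mpr
    ⟨hw, by linarith, hw2, by linarith, hw4, fun h => hne (by rw [h])⟩
  have hstrip : ∀ z ∈ R, (B.x0 ≤ z.1 ∧ z.1 ≤ B.x1) ∨ (B.y0 ≤ z.2 ∧ z.2 ≤ B.y1) := by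
    intro z hz
    obtain ⟨hzS, hz1, hz2, hz3, hz4, hz5⟩ := Finset.mem_filter.mp hz
    by_contra hcon
    push_neg at hcon
    have hx : z.1 < B.x0 := by
      by_contra hxx
      push_neg at hxx
      linarith [hcon.1 hxx]
    have hy : z.2 < B.y0 := by
      by_contra hyy
      push_neg at hyy
      linarith [hcon.2 hyy]
    exact hz5 (hmin z ⟨Finset.mem_coe.mpr hzS, hx, hy⟩ ⟨hz1, hz3⟩)
  have hcolR : ∀ z ∈ R, color z = color w := fun z hz =>
    cross_color hP hw ⟨hw1, hw2, hw3, hw4⟩ (Finset.mem_filter.mp hz).1 (hstrip z hz)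
  obtain ⟨q, hqR, hqmax⟩ := R.exists_min_image (fun z => z.1 + z.2) ⟨w, hwR⟩
  obtain ⟨hqS, hq1, hq2, hq3, hq4, hq5⟩ := Finset.mem_filter.mp hqR
  have hqx : p.1 < q.1 := lt_of_le_of_ne hq1
    (fun h => hq5 (False.elim ((hgen q (Finset.mem_coe.mpr hqS) p hpS hq5).1 h.symm)))
  have hqy : p.2 < q.2 := lt_of_le_of_ne hq3
    (fun h => hq5 (False.elim ((hgen q (Finset.mem_coe.mpr hqS) p hpS hq5).2 h.symm)))
  have hsee : sees (↑S) p q := by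
    intro z hz hr
    rw [openRect, min_eq_left hqx.le, max_eq_right hqx.le,
      min_eq_left hqy.le, max_eq_right hqy.le] at hr
    obtain ⟨h1, h2, h3, h4⟩ := hr
    have hzS : z ∈ S := hz
    have hzR : z ∈ R := Finset.mem_filter.mpr
      ⟨hzS, h1.le, by linarith, h3.le, by linarith, fun h => by rw [h] at h1; linarith⟩
    have := hqmax z hzR
    linarith
  have hqpart : participates (↑S) color q :=
    ⟨p, hpS, by rw [hcolR q hqR]; exact hne, sees_symm hsee⟩
  rcases hstrip q hqR with h | h
  · exact (hP q hqS hqpart).1 h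
  · exact (hP q hqS hqpart).2 h

lemma box_safe (hgen : genPos ↑S) (hP : NoPartStrip S color B)
    {w : Pt} (hw : w ∈ S) (hwin : B.inside w) : isSafe (↑S) color B := by
  have hsafe : safeFor (↑S) color (color w) B := by
    refine ⟨?_, ?_, ?_, ?_, ?_⟩
    · intro z hzS hzc
      exact cross_color hP hw hwin (Finset.mem_coe.mp hzS) hzc
    · intro p hp; exact quad_ne hgen hP hw hwin hp
    · intro p hp; exact quad_nw hgen hP hw hwin hp
    · intro p hp; exact quad_se hgen hP hw hwin hp
    · intro p hp; exact quad_sw hgen hP hw hwin hp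
  cases hcw : color w
  · right; rwa [hcw] at hsafe
  · left; rwa [hcw] at hsafe

end Quad

/-- Number of points of `P` strictly to the left of `p`. -/
def cntX (P : Finset Pt) (p : Pt) : ℕ := (P.filter (fun r => r.1 < p.1)).card

/-- Number of points of `P` strictly below `p`. -/
def cntY (P : Finset Pt) (p : Pt) : ℕ := (P.filter (fun r => r.2 < p.2)).card

lemma cntX_lt {P : Finset Pt} {a b r : Pt} (hr : r ∈ P) (h1 : a.1 < r.1) (h2 : r.1 < b.1) :
    cntX P a < cntX P b := by
  classical
  apply Finset.card_lt_card
  have hsub : P.filter (fun t => t.1 < a.1) ⊆ P.filter (fun t => t.1 < b.1) := by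
    intro t ht
    obtain ⟨htP, htl⟩ := Finset.mem_filter.mp ht
    exact Finset.mem_filter.mpr ⟨htP, by linarith⟩
  refine (Finset.ssubset_iff_of_subset hsub).mpr ⟨r, Finset.mem_filter.mpr ⟨hr, h2⟩, ?_⟩
  intro hmem
  exact absurd (Finset.mem_filter.mp hmem).2 (by linarith)

lemma cntY_lt {P : Finset Pt} {a b r : Pt} (hr : r ∈ P) (h1 : a.2 < r.2) (h2 : r.2 < b.2) :
    cntY P a < cntY P b := by
  classical
  apply Finset.card_lt_card
  have hsub : P.filter (fun t => t.2 < a.2) ⊆ P.filter (fun t => t.2 < b.2) := by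
    intro t ht
    obtain ⟨htP, htl⟩ := Finset.mem_filter.mp ht
    exact Finset.mem_filter.mpr ⟨htP, by linarith⟩
  refine (Finset.ssubset_iff_of_subset hsub).mpr ⟨r, Finset.mem_filter.mpr ⟨hr, h2⟩, ?_⟩
  intro hmem
  exact absurd (Finset.mem_filter.mp hmem).2 (by linarith)

lemma exists_avoid (F : Finset ℝ) {a m : ℝ} (h : a < m) : ∃ x, a < x ∧ x < m ∧ x ∉ F := by
  have h1 : (Set.Ioo a m \ ↑F).Nonempty :=
    ((Set.Ioo_infinite h).diff F.finite_toSet).nonempty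
  obtain ⟨x, hx1, hx2⟩ := h1
  exact ⟨x, hx1.1, hx1.2, by simpa using hx2⟩

/-- Given extreme values of a cell, find a bound strictly separating it from `P` coordinates. -/
lemma exists_lower (G : Finset ℝ) (m : ℝ) : ∃ a, a < m ∧ ∀ t ∈ G, t < m → t ≤ a := by
  classical
  set L := insert (m - 1) (G.filter (fun t => t < m)) with hL
  have hne : L.Nonempty := ⟨m - 1, Finset.mem_insert_self _ _⟩
  refine ⟨L.max' hne, ?_, ?_⟩
  · rw [Finset.max'_lt_iff]
    intro t ht
    rcases Finset.mem_insert.mp ht with h | h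
    · rw [h]; linarith
    · exact (Finset.mem_filter.mp h).2
  · intro t ht htm
    exact Finset.le_max' L t (Finset.mem_insert_of_mem (Finset.mem_filter.mpr ⟨ht, htm⟩))

lemma exists_upper (G : Finset ℝ) (m : ℝ) : ∃ b, m < b ∧ ∀ t ∈ G, m < t → b ≤ t := by
  classical
  set U := insert (m + 1) (G.filter (fun t => m < t)) with hU
  have hne : U.Nonempty := ⟨m + 1, Finset.mem_insert_self _ _⟩
  refine ⟨U.min' hne, ?_, ?_⟩
  · rw [Finset.lt_min'_iff]
    intro t ht
    rcases Finset.mem_insert.mp ht with h | h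
    · rw [h]; linarith
    · exact (Finset.mem_filter.mp h).2
  · intro t ht htm
    exact Finset.min'_le U t (Finset.mem_insert_of_mem (Finset.mem_filter.mpr ⟨ht, htm⟩))

/-- A grid cell can be enclosed in a safe box. -/
lemma class_box (S P Q : Finset Pt) (color : Pt → Bool) (hgen : genPos ↑S)
    (hPmem : ∀ r, r ∈ P ↔ r ∈ S ∧ participates (↑S) color r)
    (hQ : ∀ q ∈ Q, q ∈ S ∧ q ∉ P) (hQne : Q.Nonempty)
    (hsame : ∀ a ∈ Q, ∀ b ∈ Q, cntX P a = cntX P b ∧ cntY P a = cntY P b) :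
    ∃ B : Box, (∀ q ∈ S, B.offBoundary q) ∧ isSafe (↑S) color B ∧ ∀ q ∈ Q, B.inside q := by
  classical
  obtain ⟨q0, hq0⟩ := id hQne
  set m0 := (Q.image Prod.fst).min' (hQne.image _) with hm0
  set m1 := (Q.image Prod.fst).max' (hQne.image _) with hm1
  set n0 := (Q.image Prod.snd).min' (hQne.image _) with hn0
  set n1 := (Q.image Prod.snd).max' (hQne.image _) with hn1
  obtain ⟨a0, ha0Q, ha0⟩ := Finset.mem_image.mp ((Q.image Prod.fst).min'_mem (hQne.image _))
  obtain ⟨a1, ha1Q, ha1⟩ := Finset.mem_image.mp ((Q.image Prod.fst).max'_mem (hQne.image _))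
  obtain ⟨b0, hb0Q, hb0⟩ := Finset.mem_image.mp ((Q.image Prod.snd).min'_mem (hQne.image _))
  obtain ⟨b1, hb1Q, hb1⟩ := Finset.mem_image.mp ((Q.image Prod.snd).max'_mem (hQne.image _))
  rw [← hm0] at ha0
  rw [← hm1] at ha1
  rw [← hn0] at hb0
  rw [← hn1] at hb1
  have hm01 : m0 ≤ m1 := Finset.min'_le _ _ ((Q.image Prod.fst).max'_mem (hQne.image _))
  have hn01 : n0 ≤ n1 := Finset.min'_le _ _ ((Q.image Prod.snd).max'_mem (hQne.image _))
  set F := (S.image Prod.fst) ∪ (S.image Prod.snd) with hF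
  obtain ⟨ax, hax1, hax2⟩ := exists_lower (P.image Prod.fst) m0
  obtain ⟨bx, hbx1, hbx2⟩ := exists_upper (P.image Prod.fst) m1
  obtain ⟨ay, hay1, hay2⟩ := exists_lower (P.image Prod.snd) n0
  obtain ⟨by', hby1, hby2⟩ := exists_upper (P.image Prod.snd) n1
  obtain ⟨x0, hx01, hx02, hx03⟩ := exists_avoid F hax1
  obtain ⟨x1, hx11, hx12, hx13⟩ := exists_avoid F hbx1
  obtain ⟨y0, hy01, hy02, hy03⟩ := exists_avoid F hay1
  obtain ⟨y1, hy11, hy12, hy13⟩ := exists_avoid F hby1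
  set B : Box := ⟨x0, x1, y0, y1, by linarith, by linarith⟩ with hB
  have hinside : ∀ q ∈ Q, B.inside q := by
    intro q hq
    have h1 : m0 ≤ q.1 := Finset.min'_le _ _ (Finset.mem_image_of_mem _ hq)
    have h2 : q.1 ≤ m1 := Finset.le_max' _ _ (Finset.mem_image_of_mem _ hq)
    have h3 : n0 ≤ q.2 := Finset.min'_le _ _ (Finset.mem_image_of_mem _ hq)
    have h4 : q.2 ≤ n1 := Finset.le_max' _ _ (Finset.mem_image_of_mem _ hq)
    exact ⟨by simpa [hB] using lt_of_lt_of_le hx02 h1,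
      by simpa [hB] using lt_of_le_of_lt h2 hx11,
      by simpa [hB] using lt_of_lt_of_le hy02 h3,
      by simpa [hB] using lt_of_le_of_lt h4 hy11⟩
  have hnp : ∀ r ∈ P, ∀ q ∈ Q, r ≠ q := by
    intro r hr q hq heq
    have := (hPmem r).mp hr
    have h2 := hQ q hq
    rw [heq] at hr
    exact h2.2 hr
  have hNoPart : NoPartStrip S color B := by
    intro r hrS hrpart
    have hrP : r ∈ P := (hPmem r).mpr ⟨hrS, hrpart⟩
    constructor
    · rintro ⟨h1, h2⟩
      rcases lt_trichotomy r.1 m0 with hc | hc | hc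
      · have := hax2 r.1 (Finset.mem_image_of_mem _ hrP) hc
        simp only [hB] at h1
        linarith
      · exact (hgen r (Finset.mem_coe.mpr hrS) a0 (Finset.mem_coe.mpr (hQ a0 ha0Q).1)
          (hnp r hrP a0 ha0Q)).1 (by rw [hc, ← ha0])
      · rcases lt_trichotomy r.1 m1 with hd | hd | hd
        · have hlt := cntX_lt (a := a0) (b := a1) hrP (by rw [ha0]; exact hc)
            (by rw [ha1]; exact hd)
          have := (hsame a0 ha0Q a1 ha1Q).1
          omega
        · exact (hgen r (Finset.mem_coe.mpr hrS) a1 (Finset.mem_coe.mpr (hQ a1 ha1Q).1)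
            (hnp r hrP a1 ha1Q)).1 (by rw [hd, ← ha1])
        · have := hbx2 r.1 (Finset.mem_image_of_mem _ hrP) hd
          simp only [hB] at h2
          linarith
    · rintro ⟨h1, h2⟩
      rcases lt_trichotomy r.2 n0 with hc | hc | hc
      · have := hay2 r.2 (Finset.mem_image_of_mem _ hrP) hc
        simp only [hB] at h1
        linarith
      · exact (hgen r (Finset.mem_coe.mpr hrS) b0 (Finset.mem_coe.mpr (hQ b0 hb0Q).1)
          (hnp r hrP b0 hb0Q)).2 (by rw [hc, ← hb0])
      · rcases lt_trichotomy r.2 n1 with hd | hd | hd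
        · have hlt := cntY_lt (a := b0) (b := b1) hrP (by rw [hb0]; exact hc)
            (by rw [hb1]; exact hd)
          have := (hsame b0 hb0Q b1 hb1Q).2
          omega
        · exact (hgen r (Finset.mem_coe.mpr hrS) b1 (Finset.mem_coe.mpr (hQ b1 hb1Q).1)
            (hnp r hrP b1 hb1Q)).2 (by rw [hd, ← hb1])
        · have := hby2 r.2 (Finset.mem_image_of_mem _ hrP) hd
          simp only [hB] at h2
          linarith
  refine ⟨B, ?_, ?_, hinside⟩
  · intro q hq
    refine ⟨fun h => hx03 ?_, fun h => hx13 ?_, fun h => hy03 ?_, fun h => hy13 ?_⟩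
    · exact Finset.mem_union_left _ (Finset.mem_image.mpr ⟨q, hq, h⟩)
    · exact Finset.mem_union_left _ (Finset.mem_image.mpr ⟨q, hq, h⟩)
    · exact Finset.mem_union_right _ (Finset.mem_image.mpr ⟨q, hq, h⟩)
    · exact Finset.mem_union_right _ (Finset.mem_image.mpr ⟨q, hq, h⟩)
  · exact box_safe hgen hNoPart (hQ q0 hq0).1 (hinside q0 hq0)

end Stmt10Aux


set_option maxHeartbeats 1000000 in
/-- If `h ≥ 2` points of `S` participate, then `n(H(S)+1) ≤ C·n·log h`
for an absolute constant `C`. -/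
theorem stmt10 : ∃ C : ℝ, 0 < C ∧
    ∀ (S : Finset Pt) (color : Pt → Bool), genPos (↑S : Set Pt) →
      2 ≤ (S.filter (fun p => participates (↑S : Set Pt) color p)).card →
      (S.card : ℝ) * (structEntropy S color + 1) ≤
        C * (S.card : ℝ) *
          Real.logb 2 ((S.filter (fun p => participates (↑S : Set Pt) color p)).card : ℝ) := by
  classical
  refine ⟨5, by norm_num, ?_⟩
  intro S color hgen hh
  set P := S.filter (fun p => participates (↑S : Set Pt) color p) with hPdef
  set n := S.card with hndef
  set cls : Pt → Finset Pt := fun p =>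
    (S \ P).filter (fun q => Stmt10Aux.cntX P q = Stmt10Aux.cntX P p ∧
      Stmt10Aux.cntY P q = Stmt10Aux.cntY P p) with hcls
  set Prt := P.image (fun p => ({p} : Finset Pt)) ∪ (S \ P).image cls with hPrt
  have hPmem : ∀ r, r ∈ P ↔ r ∈ S ∧ participates (↑S : Set Pt) color r := by
    intro r
    rw [hPdef, Finset.mem_filter]
  have hclsmem : ∀ p q, q ∈ cls p ↔ (q ∈ S ∧ q ∉ P) ∧
      Stmt10Aux.cntX P q = Stmt10Aux.cntX P p ∧ Stmt10Aux.cntY P q = Stmt10Aux.cntY P p := by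
    intro p q
    rw [hcls]
    simp only [Finset.mem_filter, Finset.mem_sdiff]
  have hpart1 : ∀ C ∈ Prt, C ⊆ S ∧ C.Nonempty := by
    intro C hC
    rw [hPrt, Finset.mem_union] at hC
    rcases hC with hC | hC
    · obtain ⟨p, hp, rfl⟩ := Finset.mem_image.mp hC
      have hpS : p ∈ S := ((hPmem p).mp hp).1
      exact ⟨Finset.singleton_subset_iff.mpr hpS, ⟨p, Finset.mem_singleton_self p⟩⟩
    · obtain ⟨p, hp, rfl⟩ := Finset.mem_image.mp hC
      obtain ⟨h1, h2⟩ := Finset.mem_sdiff.mp hp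
      constructor
      · intro q hq
        exact ((hclsmem p q).mp hq).1.1
      · exact ⟨p, (hclsmem p p).mpr ⟨⟨h1, h2⟩, rfl, rfl⟩⟩
  have hpart2 : ∀ p ∈ S, ∃! C, C ∈ Prt ∧ p ∈ C := by
    intro p hp
    by_cases hpP : p ∈ P
    · refine ⟨{p}, ⟨?_, Finset.mem_singleton_self p⟩, ?_⟩
      · rw [hPrt]
        exact Finset.mem_union_left _ (Finset.mem_image_of_mem _ hpP)
      · rintro C ⟨hC, hpC⟩
        rw [hPrt, Finset.mem_union] at hC
        rcases hC with hC | hC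
        · obtain ⟨r, hr, rfl⟩ := Finset.mem_image.mp hC
          rw [Finset.mem_singleton] at hpC
          rw [hpC]
        · obtain ⟨r, hr, rfl⟩ := Finset.mem_image.mp hC
          exact absurd hpP ((hclsmem r p).mp hpC).1.2
    · refine ⟨cls p, ⟨?_, (hclsmem p p).mpr ⟨⟨hp, hpP⟩, rfl, rfl⟩⟩, ?_⟩
      · rw [hPrt]
        exact Finset.mem_union_right _
          (Finset.mem_image_of_mem _ (Finset.mem_sdiff.mpr ⟨hp, hpP⟩))
      · rintro C ⟨hC, hpC⟩
        rw [hPrt, Finset.mem_union] at hC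
        rcases hC with hC | hC
        · obtain ⟨r, hr, rfl⟩ := Finset.mem_image.mp hC
          rw [Finset.mem_singleton] at hpC
          exfalso
          rw [← hpC] at hr
          exact hpP hr
        · obtain ⟨r, hr, rfl⟩ := Finset.mem_image.mp hC
          obtain ⟨_, hx, hy⟩ := (hclsmem r p).mp hpC
          apply Finset.ext
          intro q
          rw [hclsmem, hclsmem]
          constructor
          · rintro ⟨h1, h2, h3⟩
            exact ⟨h1, by omega, by omega⟩
          · rintro ⟨h1, h2, h3⟩
            exact ⟨h1, by omega, by omega⟩
  have hpartition : isPartition S Prt := ⟨hpart1, hpart2⟩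
  have hrespect : respectful S color Prt := by
    intro C hC
    rw [hPrt, Finset.mem_union] at hC
    rcases hC with hC | hC
    · obtain ⟨p, hp, rfl⟩ := Finset.mem_image.mp hC
      exact Or.inl (Finset.card_singleton p)
    · obtain ⟨p, hp, rfl⟩ := Finset.mem_image.mp hC
      right
      obtain ⟨h1, h2⟩ := Finset.mem_sdiff.mp hp
      apply Stmt10Aux.class_box S P (cls p) color hgen hPmem
      · intro q hq
        exact ⟨((hclsmem p q).mp hq).1.1, ((hclsmem p q).mp hq).1.2⟩
      · exact ⟨p, (hclsmem p p).mpr ⟨⟨h1, h2⟩, rfl, rfl⟩⟩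
      · intro a ha b hb
        obtain ⟨_, hax, hay⟩ := (hclsmem p a).mp ha
        obtain ⟨_, hbx, hby⟩ := (hclsmem p b).mp hb
        exact ⟨hax.trans hbx.symm, hay.trans hby.symm⟩
  -- cardinality bound on the number of parts
  have hcard : Prt.card ≤ P.card + (P.card + 1) * (P.card + 1) := by
    have himg : (S \ P).image cls =
        (((S \ P)).image (fun p => (Stmt10Aux.cntX P p, Stmt10Aux.cntY P p))).image
          (fun v => (S \ P).filter (fun q => Stmt10Aux.cntX P q = v.1 ∧
            Stmt10Aux.cntY P q = v.2)) := by
      rw [Finset.image_image]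
      rfl
    have hsub : ((S \ P)).image (fun p => (Stmt10Aux.cntX P p, Stmt10Aux.cntY P p)) ⊆
        Finset.range (P.card + 1) ×ˢ Finset.range (P.card + 1) := by
      intro v hv
      obtain ⟨p, hp, rfl⟩ := Finset.mem_image.mp hv
      refine Finset.mem_product.mpr ⟨Finset.mem_range.mpr ?_, Finset.mem_range.mpr ?_⟩
      · exact Nat.lt_succ_of_le (Finset.card_filter_le P _)
      · exact Nat.lt_succ_of_le (Finset.card_filter_le P _)
    calc Prt.card ≤ (P.image (fun p => ({p} : Finset Pt))).card + ((S \ P).image cls).card :=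
          Finset.card_union_le _ _
      _ ≤ P.card + ((S \ P).image cls).card := by
          gcongr
          exact Finset.card_image_le
      _ ≤ P.card + (P.card + 1) * (P.card + 1) := by
          gcongr
          rw [himg]
          calc _ ≤ (((S \ P)).image (fun p => (Stmt10Aux.cntX P p, Stmt10Aux.cntY P p))).card :=
                Finset.card_image_le
            _ ≤ (Finset.range (P.card + 1) ×ˢ Finset.range (P.card + 1)).card :=
                Finset.card_le_card hsub
            _ = (P.card + 1) * (P.card + 1) := by
                rw [Finset.card_product, Finset.card_range]
  have hn2 : 2 ≤ n := le_trans hh (Finset.card_le_card (by rw [hPdef]; exact Finset.filter_subset _ _))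
  have hnpos : (0:ℝ) < n := by
    have : 0 < n := by omega
    exact_mod_cast this
  -- sum of part sizes is n
  have hsumN : ∑ C ∈ Prt, C.card = n := by
    have h1 : ∀ C ∈ Prt, C.card = ∑ p ∈ S, (if p ∈ C then 1 else 0) := by
      intro C hC
      rw [← Finset.card_filter]
      congr 1
      ext q
      simp only [Finset.mem_filter]
      exact ⟨fun h => ⟨(hpart1 C hC).1 h, h⟩, fun h => h.2⟩
    rw [Finset.sum_congr rfl h1, Finset.sum_comm]
    have h2 : ∀ p ∈ S, (∑ C ∈ Prt, if p ∈ C then 1 else 0) = 1 := by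
      intro p hp
      obtain ⟨C0, ⟨hC0, hpC0⟩, huniq⟩ := hpart2 p hp
      rw [Finset.sum_eq_single C0]
      · exact if_pos hpC0
      · intro b hb hbne
        by_cases h : p ∈ b
        · exact absurd (huniq b ⟨hb, h⟩) hbne
        · exact if_neg h
      · intro h
        exact absurd hC0 h
    rw [Finset.sum_congr rfl h2, Finset.sum_const, smul_eq_mul, mul_one]
  have hsumR : ∑ C ∈ Prt, (C.card : ℝ) = (n : ℝ) := by
    rw [← Nat.cast_sum, hsumN]
  have hcpos : ∀ C ∈ Prt, (0:ℝ) < C.card := by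
    intro C hC
    exact_mod_cast Finset.card_pos.mpr (hpart1 C hC).2
  -- Jensen: entropy is at most log of the number of parts
  have hconc : ConcaveOn ℝ (Set.Ioi 0) (Real.logb 2) := by
    have h2 := ConcaveOn.smul (c := (Real.log 2)⁻¹) (by positivity)
      strictConcaveOn_log_Ioi.concaveOn
    have heq : (fun x => (Real.log 2)⁻¹ • Real.log x) = Real.logb 2 := by
      funext x
      simp [Real.logb, smul_eq_mul, div_eq_inv_mul]
    rwa [heq] at h2
  have hw0 : ∀ C ∈ Prt, (0:ℝ) ≤ (C.card : ℝ) / n :=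
    fun C _ => div_nonneg (Nat.cast_nonneg _) (Nat.cast_nonneg _)
  have hw1 : ∑ C ∈ Prt, (C.card : ℝ) / n = 1 := by
    rw [← Finset.sum_div, hsumR, div_self hnpos.ne']
  have hmem : ∀ C ∈ Prt, (n : ℝ) / C.card ∈ Set.Ioi (0:ℝ) := by
    intro C hC
    exact Set.mem_Ioi.mpr (div_pos hnpos (hcpos C hC))
  have hjen := hconc.le_map_sum hw0 hw1 hmem
  have hsum1 : ∑ C ∈ Prt, ((C.card : ℝ) / n) • ((n : ℝ) / C.card) = (Prt.card : ℝ) := by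
    have h1 : ∀ C ∈ Prt, ((C.card : ℝ) / n) • ((n : ℝ) / C.card) = 1 := by
      intro C hC
      rw [smul_eq_mul, div_mul_div_comm, mul_comm ((C.card:ℝ)) ((n:ℝ))]
      exact div_self (mul_ne_zero hnpos.ne' (hcpos C hC).ne')
    rw [Finset.sum_congr rfl h1, Finset.sum_const, nsmul_eq_mul, mul_one]
  rw [hsum1] at hjen
  have hentPrt : partitionEntropy n Prt ≤ Real.logb 2 (Prt.card : ℝ) := by
    have heq : partitionEntropy n Prt =
        ∑ C ∈ Prt, ((C.card : ℝ) / n) • Real.logb 2 ((n : ℝ) / C.card) := by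
      simp only [partitionEntropy, smul_eq_mul]
    rw [heq]
    exact hjen
  -- structural entropy is at most the entropy of this partition
  have hSE : structEntropy S color ≤ partitionEntropy n Prt := by
    rw [structEntropy]
    apply csInf_le
    · refine ⟨0, fun x hx => ?_⟩
      obtain ⟨Prt', hp', hr', rfl⟩ := hx
      apply Finset.sum_nonneg
      intro C hC
      have hCne := (hp'.1 C hC).2
      have hCS := (hp'.1 C hC).1
      have h1 : (0:ℝ) < C.card := by exact_mod_cast Finset.card_pos.mpr hCne
      have h2 : (C.card : ℝ) ≤ S.card := by exact_mod_cast Finset.card_le_card hCS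
      apply mul_nonneg (div_nonneg (Nat.cast_nonneg _) (Nat.cast_nonneg _))
      apply Real.logb_nonneg one_lt_two
      rw [le_div_iff₀ h1]
      linarith
    · exact ⟨Prt, hpartition, hrespect, rfl⟩
  -- final arithmetic
  have hPrtpos : (0:ℝ) < Prt.card := by
    have hSne : S.Nonempty := Finset.card_pos.mp (by omega)
    obtain ⟨p, hp⟩ := hSne
    obtain ⟨C0, ⟨hC0, _⟩, _⟩ := hpart2 p hp
    exact_mod_cast Finset.card_pos.mpr ⟨C0, hC0⟩
  have hhR : (2:ℝ) ≤ P.card := by exact_mod_cast hh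
  have hkR : (Prt.card : ℝ) ≤ (P.card : ℝ) ^ 4 := by
    have h1 : (Prt.card : ℝ) ≤ (P.card : ℝ) + ((P.card : ℝ) + 1) * ((P.card : ℝ) + 1) := by
      exact_mod_cast hcard
    nlinarith [sq_nonneg ((P.card : ℝ)), sq_nonneg ((P.card : ℝ) - 1),
      sq_nonneg ((P.card : ℝ) * (P.card : ℝ) - 2)]
  have hlogk : Real.logb 2 (Prt.card : ℝ) ≤ 4 * Real.logb 2 (P.card : ℝ) := by
    have h2 : Real.logb 2 (Prt.card : ℝ) ≤ Real.logb 2 ((P.card : ℝ) ^ 4) :=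
      (Real.logb_le_logb (by norm_num) hPrtpos (by nlinarith)).mpr hkR
    rw [Real.logb_pow] at h2
    calc Real.logb 2 (Prt.card : ℝ) ≤ ((4:ℕ) : ℝ) * Real.logb 2 (P.card : ℝ) := h2
      _ = 4 * Real.logb 2 (P.card : ℝ) := by norm_num
  have hlog1 : 1 ≤ Real.logb 2 (P.card : ℝ) := by
    rw [show (1:ℝ) = Real.logb 2 2 from (Real.logb_self_eq_one (by norm_num)).symm]
    exact (Real.logb_le_logb (by norm_num) (by norm_num) (by linarith)).mpr hhR
  have hfinal : structEntropy S color + 1 ≤ 5 * Real.logb 2 (P.card : ℝ) := by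
    have := hSE.trans hentPrt
    linarith
  have hnn : (0:ℝ) ≤ n := hnpos.le
  calc (n : ℝ) * (structEntropy S color + 1) ≤ (n : ℝ) * (5 * Real.logb 2 (P.card : ℝ)) :=
        mul_le_mul_of_nonneg_left hfinal hnn
    _ = 5 * (n : ℝ) * Real.logb 2 (P.card : ℝ) := by ring
end
end

section
/- Let S be a finite bichromatic point set with h participating points p₁,…,p_h. Partition the plane by the h+1 open vertical slabs and h+1 open horizontal slabs determined by the x-coordinates and y-coordinates of the participating points respectively. Then every axis-aligned box arising as the intersection of a vertical slab and a horizontal slab that contains at least one point of S is a safe box for S. -/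
open Classical

noncomputable section

private lemma not_openRect_left_s11 (z b : Pt) : ¬ openRect z b z := by
  rintro ⟨h1, h2, -, -⟩
  rcases le_total z.1 b.1 with h | h
  · exact lt_irrefl _ ((min_eq_left h) ▸ h1)
  · exact lt_irrefl _ ((max_eq_left h) ▸ h2)

private lemma not_openRect_right_s11 (a z : Pt) : ¬ openRect a z z := by
  rintro ⟨h1, h2, -, -⟩
  rcases le_total a.1 z.1 with h | h
  · exact lt_irrefl _ ((max_eq_right h) ▸ h2)
  · exact lt_irrefl _ ((min_eq_right h) ▸ h1)

private lemma openRect_trans_left {a b z w : Pt} (hz : openRect a b z) (hw : openRect a z w) :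
    openRect a b w :=
  ⟨lt_of_le_of_lt (le_min (min_le_left _ _) hz.1.le) hw.1,
   lt_of_lt_of_le hw.2.1 (max_le (le_max_left _ _) hz.2.1.le),
   lt_of_le_of_lt (le_min (min_le_left _ _) hz.2.2.1.le) hw.2.2.1,
   lt_of_lt_of_le hw.2.2.2 (max_le (le_max_left _ _) hz.2.2.2.le)⟩

private lemma openRect_trans_right {a b z w : Pt} (hz : openRect a b z) (hw : openRect z b w) :
    openRect a b w :=
  ⟨lt_of_le_of_lt (le_min hz.1.le (min_le_right _ _)) hw.1,
   lt_of_lt_of_le hw.2.1 (max_le hz.2.1.le (le_max_right _ _)),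
   lt_of_le_of_lt (le_min hz.2.2.1.le (min_le_right _ _)) hw.2.2.1,
   lt_of_lt_of_le hw.2.2.2 (max_le hz.2.2.2.le (le_max_right _ _))⟩

private lemma sees_of_filter_empty {S : Finset Pt} {a b : Pt}
    (h : S.filter (fun z => openRect a b z) = ∅) : sees (↑S) a b := by
  intro z hz hr
  exact Finset.filter_eq_empty_iff.mp h (Finset.mem_coe.mp hz) hr

private lemma card_lt_of_mem {S : Finset Pt} {a b z p q : Pt}
    (hzS : z ∈ S) (hzr : openRect a b z)
    (himp : ∀ w, openRect p q w → openRect a b w) (hself : ¬ openRect p q z) :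
    (S.filter (fun w => openRect p q w)).card < (S.filter (fun w => openRect a b w)).card := by
  have hsub : S.filter (fun w => openRect p q w) ⊆ S.filter (fun w => openRect a b w) := by
    intro w hw
    rcases Finset.mem_filter.mp hw with ⟨h1, h2⟩
    exact Finset.mem_filter.mpr ⟨h1, himp w h2⟩
  exact Finset.card_lt_card ((Finset.ssubset_iff_of_subset hsub).mpr
    ⟨z, Finset.mem_filter.mpr ⟨hzS, hzr⟩, fun hmem => hself (Finset.mem_filter.mp hmem).2⟩)

private lemma strip_lemma (S : Finset Pt) (color : Pt → Bool) (B : Box) :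
    ∀ n : ℕ, ∀ a b : Pt, a ∈ S → b ∈ S → color a ≠ color b →
      (((B.x0 ≤ a.1 ∧ a.1 ≤ B.x1) ∧ (B.x0 ≤ b.1 ∧ b.1 ≤ B.x1)) ∨
       ((B.y0 ≤ a.2 ∧ a.2 ≤ B.y1) ∧ (B.y0 ≤ b.2 ∧ b.2 ≤ B.y1))) →
      (S.filter (fun z => openRect a b z)).card = n →
      ∃ p ∈ S, p ∈ B.cross ∧ participates (↑S) color p := by
  intro n
  induction n using Nat.strong_induction_on with
  | _ n ih =>
    intro a b ha hb hcol hstrip hcard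
    rcases Finset.eq_empty_or_nonempty (S.filter (fun z => openRect a b z)) with he | ⟨z, hz⟩
    · refine ⟨a, ha, ?_, b, Finset.mem_coe.mpr hb, hcol.symm, sees_of_filter_empty he⟩
      rcases hstrip with ⟨h, _⟩ | ⟨h, _⟩
      · exact Or.inl h
      · exact Or.inr h
    · rcases Finset.mem_filter.mp hz with ⟨hzS, hzr⟩
      subst hcard
      have hznew : (((B.x0 ≤ a.1 ∧ a.1 ≤ B.x1) ∧ (B.x0 ≤ z.1 ∧ z.1 ≤ B.x1)) ∨
          ((B.y0 ≤ a.2 ∧ a.2 ≤ B.y1) ∧ (B.y0 ≤ z.2 ∧ z.2 ≤ B.y1))) ∧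
          (((B.x0 ≤ z.1 ∧ z.1 ≤ B.x1) ∧ (B.x0 ≤ b.1 ∧ b.1 ≤ B.x1)) ∨
          ((B.y0 ≤ z.2 ∧ z.2 ≤ B.y1) ∧ (B.y0 ≤ b.2 ∧ b.2 ≤ B.y1))) := by
        rcases hstrip with ⟨⟨ha0, ha1⟩, hb0, hb1⟩ | ⟨⟨ha0, ha1⟩, hb0, hb1⟩
        · have hz0 : B.x0 ≤ z.1 := le_trans (le_min ha0 hb0) hzr.1.le
          have hz1 : z.1 ≤ B.x1 := le_trans hzr.2.1.le (max_le ha1 hb1)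
          exact ⟨Or.inl ⟨⟨ha0, ha1⟩, hz0, hz1⟩, Or.inl ⟨⟨hz0, hz1⟩, hb0, hb1⟩⟩
        · have hz0 : B.y0 ≤ z.2 := le_trans (le_min ha0 hb0) hzr.2.2.1.le
          have hz1 : z.2 ≤ B.y1 := le_trans hzr.2.2.2.le (max_le ha1 hb1)
          exact ⟨Or.inr ⟨⟨ha0, ha1⟩, hz0, hz1⟩, Or.inr ⟨⟨hz0, hz1⟩, hb0, hb1⟩⟩
      by_cases hzc : color z = color a
      · exact ih _ (card_lt_of_mem hzS hzr (fun w => openRect_trans_right hzr)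
          (not_openRect_left_s11 z b)) z b hzS hb (by rw [hzc]; exact hcol) hznew.2 rfl
      · exact ih _ (card_lt_of_mem hzS hzr (fun w => openRect_trans_left hzr)
          (not_openRect_right_s11 a z)) a z ha hzS (Ne.symm hzc) hznew.1 rfl

private lemma quadNE (S : Finset Pt) (color : Pt → Bool) (B : Box) (c : Bool)
    (hcc : ∀ z ∈ S, z ∈ B.cross → color z = c)
    (q : Pt) (hqS : q ∈ S) (hq1 : B.x1 < q.1) (hq2 : B.y1 < q.2) (hqc : color q ≠ c)
    (hmin : ∀ z ∈ (↑S : Set Pt) ∩ B.NE, (z.1 ≤ q.1 ∧ z.2 ≤ q.2) → z = q) :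
    ∀ n : ℕ, ∀ a : Pt, a ∈ S → a ∈ B.cross →
      B.x0 < a.1 → a.1 < q.1 → B.y0 < a.2 → a.2 < q.2 →
      (S.filter (fun z => openRect a q z)).card = n →
      ∃ p ∈ S, p ∈ B.cross ∧ participates (↑S) color p := by
  intro n
  induction n using Nat.strong_induction_on with
  | _ n ih =>
    intro a haS hacr hax0 haq1 hay0 haq2 hcard
    have hcol : color a ≠ color q := by
      rw [hcc a haS hacr]; exact fun h => hqc h.symm
    rcases Finset.eq_empty_or_nonempty (S.filter (fun z => openRect a q z)) with he | ⟨z, hz⟩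
    · exact ⟨a, haS, hacr, q, Finset.mem_coe.mpr hqS, hcol.symm, sees_of_filter_empty he⟩
    · rcases Finset.mem_filter.mp hz with ⟨hzS, hzr⟩
      subst hcard
      have hz1 : a.1 < z.1 := (min_eq_left haq1.le) ▸ hzr.1
      have hz2 : z.1 < q.1 := lt_of_lt_of_le hzr.2.1 (max_le haq1.le le_rfl)
      have hz3 : a.2 < z.2 := (min_eq_left haq2.le) ▸ hzr.2.2.1
      have hz4 : z.2 < q.2 := lt_of_lt_of_le hzr.2.2.2 (max_le haq2.le le_rfl)
      by_cases hzcr : z ∈ B.cross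
      · exact ih _ (card_lt_of_mem hzS hzr (fun w => openRect_trans_right hzr)
          (not_openRect_left_s11 z q)) z hzS hzcr (hax0.trans hz1) hz2 (hay0.trans hz3) hz4 rfl
      · exfalso
        have hzx : B.x1 < z.1 := by
          by_contra h
          exact hzcr (Or.inl ⟨(hax0.trans hz1).le, le_of_not_gt h⟩)
        have hzy : B.y1 < z.2 := by
          by_contra h
          exact hzcr (Or.inr ⟨(hay0.trans hz3).le, le_of_not_gt h⟩)
        have heq := hmin z ⟨Finset.mem_coe.mpr hzS, ⟨hzx, hzy⟩⟩ ⟨hz2.le, hz4.le⟩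
        rw [heq] at hz2
        exact lt_irrefl _ hz2

private lemma quadNW (S : Finset Pt) (color : Pt → Bool) (B : Box) (c : Bool)
    (hcc : ∀ z ∈ S, z ∈ B.cross → color z = c)
    (q : Pt) (hqS : q ∈ S) (hq1 : q.1 < B.x0) (hq2 : B.y1 < q.2) (hqc : color q ≠ c)
    (hmin : ∀ z ∈ (↑S : Set Pt) ∩ B.NW, (q.1 ≤ z.1 ∧ z.2 ≤ q.2) → z = q) :
    ∀ n : ℕ, ∀ a : Pt, a ∈ S → a ∈ B.cross →
      q.1 < a.1 → a.1 < B.x1 → B.y0 < a.2 → a.2 < q.2 →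
      (S.filter (fun z => openRect a q z)).card = n →
      ∃ p ∈ S, p ∈ B.cross ∧ participates (↑S) color p := by
  intro n
  induction n using Nat.strong_induction_on with
  | _ n ih =>
    intro a haS hacr haq1 hax1 hay0 haq2 hcard
    have hcol : color a ≠ color q := by
      rw [hcc a haS hacr]; exact fun h => hqc h.symm
    rcases Finset.eq_empty_or_nonempty (S.filter (fun z => openRect a q z)) with he | ⟨z, hz⟩
    · exact ⟨a, haS, hacr, q, Finset.mem_coe.mpr hqS, hcol.symm, sees_of_filter_empty he⟩
    · rcases Finset.mem_filter.mp hz with ⟨hzS, hzr⟩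
      subst hcard
      have hz1 : q.1 < z.1 := (min_eq_right haq1.le) ▸ hzr.1
      have hz2 : z.1 < a.1 := lt_of_lt_of_le hzr.2.1 (max_le le_rfl haq1.le)
      have hz3 : a.2 < z.2 := (min_eq_left haq2.le) ▸ hzr.2.2.1
      have hz4 : z.2 < q.2 := lt_of_lt_of_le hzr.2.2.2 (max_le haq2.le le_rfl)
      by_cases hzcr : z ∈ B.cross
      · exact ih _ (card_lt_of_mem hzS hzr (fun w => openRect_trans_right hzr)
          (not_openRect_left_s11 z q)) z hzS hzcr hz1 (hz2.trans hax1) (hay0.trans hz3) hz4 rfl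
      · exfalso
        have hzx : z.1 < B.x0 := by
          by_contra h
          exact hzcr (Or.inl ⟨le_of_not_gt h, (hz2.trans hax1).le⟩)
        have hzy : B.y1 < z.2 := by
          by_contra h
          exact hzcr (Or.inr ⟨(hay0.trans hz3).le, le_of_not_gt h⟩)
        have heq := hmin z ⟨Finset.mem_coe.mpr hzS, ⟨hzx, hzy⟩⟩ ⟨hz1.le, hz4.le⟩
        rw [heq] at hz1
        exact lt_irrefl _ hz1

private lemma quadSE (S : Finset Pt) (color : Pt → Bool) (B : Box) (c : Bool)
    (hcc : ∀ z ∈ S, z ∈ B.cross → color z = c)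
    (q : Pt) (hqS : q ∈ S) (hq1 : B.x1 < q.1) (hq2 : q.2 < B.y0) (hqc : color q ≠ c)
    (hmin : ∀ z ∈ (↑S : Set Pt) ∩ B.SE, (z.1 ≤ q.1 ∧ q.2 ≤ z.2) → z = q) :
    ∀ n : ℕ, ∀ a : Pt, a ∈ S → a ∈ B.cross →
      B.x0 < a.1 → a.1 < q.1 → q.2 < a.2 → a.2 < B.y1 →
      (S.filter (fun z => openRect a q z)).card = n →
      ∃ p ∈ S, p ∈ B.cross ∧ participates (↑S) color p := by
  intro n
  induction n using Nat.strong_induction_on with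
  | _ n ih =>
    intro a haS hacr hax0 haq1 haq2 hay1 hcard
    have hcol : color a ≠ color q := by
      rw [hcc a haS hacr]; exact fun h => hqc h.symm
    rcases Finset.eq_empty_or_nonempty (S.filter (fun z => openRect a q z)) with he | ⟨z, hz⟩
    · exact ⟨a, haS, hacr, q, Finset.mem_coe.mpr hqS, hcol.symm, sees_of_filter_empty he⟩
    · rcases Finset.mem_filter.mp hz with ⟨hzS, hzr⟩
      subst hcard
      have hz1 : a.1 < z.1 := (min_eq_left haq1.le) ▸ hzr.1
      have hz2 : z.1 < q.1 := lt_of_lt_of_le hzr.2.1 (max_le haq1.le le_rfl)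
      have hz3 : q.2 < z.2 := (min_eq_right haq2.le) ▸ hzr.2.2.1
      have hz4 : z.2 < a.2 := lt_of_lt_of_le hzr.2.2.2 (max_le le_rfl haq2.le)
      by_cases hzcr : z ∈ B.cross
      · exact ih _ (card_lt_of_mem hzS hzr (fun w => openRect_trans_right hzr)
          (not_openRect_left_s11 z q)) z hzS hzcr (hax0.trans hz1) hz2 hz3 (hz4.trans hay1) rfl
      · exfalso
        have hzx : B.x1 < z.1 := by
          by_contra h
          exact hzcr (Or.inl ⟨(hax0.trans hz1).le, le_of_not_gt h⟩)
        have hzy : z.2 < B.y0 := by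
          by_contra h
          exact hzcr (Or.inr ⟨le_of_not_gt h, (hz4.trans hay1).le⟩)
        have heq := hmin z ⟨Finset.mem_coe.mpr hzS, ⟨hzx, hzy⟩⟩ ⟨hz2.le, hz3.le⟩
        rw [heq] at hz2
        exact lt_irrefl _ hz2

private lemma quadSW (S : Finset Pt) (color : Pt → Bool) (B : Box) (c : Bool)
    (hcc : ∀ z ∈ S, z ∈ B.cross → color z = c)
    (q : Pt) (hqS : q ∈ S) (hq1 : q.1 < B.x0) (hq2 : q.2 < B.y0) (hqc : color q ≠ c)
    (hmin : ∀ z ∈ (↑S : Set Pt) ∩ B.SW, (q.1 ≤ z.1 ∧ q.2 ≤ z.2) → z = q) :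
    ∀ n : ℕ, ∀ a : Pt, a ∈ S → a ∈ B.cross →
      q.1 < a.1 → a.1 < B.x1 → q.2 < a.2 → a.2 < B.y1 →
      (S.filter (fun z => openRect a q z)).card = n →
      ∃ p ∈ S, p ∈ B.cross ∧ participates (↑S) color p := by
  intro n
  induction n using Nat.strong_induction_on with
  | _ n ih =>
    intro a haS hacr haq1 hax1 haq2 hay1 hcard
    have hcol : color a ≠ color q := by
      rw [hcc a haS hacr]; exact fun h => hqc h.symm
    rcases Finset.eq_empty_or_nonempty (S.filter (fun z => openRect a q z)) with he | ⟨z, hz⟩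
    · exact ⟨a, haS, hacr, q, Finset.mem_coe.mpr hqS, hcol.symm, sees_of_filter_empty he⟩
    · rcases Finset.mem_filter.mp hz with ⟨hzS, hzr⟩
      subst hcard
      have hz1 : q.1 < z.1 := (min_eq_right haq1.le) ▸ hzr.1
      have hz2 : z.1 < a.1 := lt_of_lt_of_le hzr.2.1 (max_le le_rfl haq1.le)
      have hz3 : q.2 < z.2 := (min_eq_right haq2.le) ▸ hzr.2.2.1
      have hz4 : z.2 < a.2 := lt_of_lt_of_le hzr.2.2.2 (max_le le_rfl haq2.le)
      by_cases hzcr : z ∈ B.cross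
      · exact ih _ (card_lt_of_mem hzS hzr (fun w => openRect_trans_right hzr)
          (not_openRect_left_s11 z q)) z hzS hzcr hz1 (hz2.trans hax1) hz3 (hz4.trans hay1) rfl
      · exfalso
        have hzx : z.1 < B.x0 := by
          by_contra h
          exact hzcr (Or.inl ⟨le_of_not_gt h, (hz2.trans hax1).le⟩)
        have hzy : z.2 < B.y0 := by
          by_contra h
          exact hzcr (Or.inr ⟨le_of_not_gt h, (hz4.trans hay1).le⟩)
        have heq := hmin z ⟨Finset.mem_coe.mpr hzS, ⟨hzx, hzy⟩⟩ ⟨hz1.le, hz3.le⟩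
        rw [heq] at hz1
        exact lt_irrefl _ hz1


/-- A box whose cross contains no participating point of `S` and which contains
at least one point of `S` is safe for `S`. -/
theorem stmt11 (S : Finset Pt) (color : Pt → Bool) (hgp : genPos (↑S : Set Pt))
    (B : Box) (hbd : ∀ q ∈ S, B.offBoundary q)
    (hslab : ∀ p ∈ S, participates (↑S : Set Pt) color p → p ∉ B.cross)
    (hne : ∃ p ∈ S, B.inside p) :
    isSafe (↑S : Set Pt) color B := by
  obtain ⟨p0, hp0S, h01, h02, h03, h04⟩ := hne
  have hp0cr : p0 ∈ B.cross := Or.inl ⟨h01.le, h02.le⟩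
  have noPart : ∀ p ∈ S, p ∈ B.cross → ¬ participates (↑S) color p :=
    fun p hp hcr hpart => hslab p hp hpart hcr
  have hcc : ∀ z ∈ S, z ∈ B.cross → color z = color p0 := by
    intro z hzS hzcr
    by_contra hzc
    have hcol : color p0 ≠ color z := fun h => hzc h.symm
    rcases hzcr with hv | hh
    · obtain ⟨p, hpS, hpcr, hpart⟩ :=
        strip_lemma S color B _ p0 z hp0S hzS hcol (Or.inl ⟨⟨h01.le, h02.le⟩, hv⟩) rfl
      exact noPart p hpS hpcr hpart
    · obtain ⟨p, hpS, hpcr, hpart⟩ :=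
        strip_lemma S color B _ p0 z hp0S hzS hcol (Or.inr ⟨⟨h03.le, h04.le⟩, hh⟩) rfl
      exact noPart p hpS hpcr hpart
  have hsafe : safeFor (↑S) color (color p0) B := by
    refine ⟨fun p hp hcr => hcc p (Finset.mem_coe.mp hp) hcr, ?_, ?_, ?_, ?_⟩
    · rintro p ⟨⟨hpS, hp1, hp2⟩, hpmin⟩
      by_contra hpc
      obtain ⟨r, hrS, hrcr, hrpart⟩ :=
        quadNE S color B (color p0) hcc p (Finset.mem_coe.mp hpS) hp1 hp2 hpc hpmin
          _ p0 hp0S hp0cr h01 (h02.trans hp1) h03 (h04.trans hp2) rfl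
      exact noPart r hrS hrcr hrpart
    · rintro p ⟨⟨hpS, hp1, hp2⟩, hpmin⟩
      by_contra hpc
      obtain ⟨r, hrS, hrcr, hrpart⟩ :=
        quadNW S color B (color p0) hcc p (Finset.mem_coe.mp hpS) hp1 hp2 hpc hpmin
          _ p0 hp0S hp0cr (hp1.trans h01) h02 h03 (h04.trans hp2) rfl
      exact noPart r hrS hrcr hrpart
    · rintro p ⟨⟨hpS, hp1, hp2⟩, hpmin⟩
      by_contra hpc
      obtain ⟨r, hrS, hrcr, hrpart⟩ :=
        quadSE S color B (color p0) hcc p (Finset.mem_coe.mp hpS) hp1 hp2 hpc hpmin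
          _ p0 hp0S hp0cr h01 (h02.trans hp1) (hp2.trans h03) h04 rfl
      exact noPart r hrS hrcr hrpart
    · rintro p ⟨⟨hpS, hp1, hp2⟩, hpmin⟩
      by_contra hpc
      obtain ⟨r, hrS, hrcr, hrpart⟩ :=
        quadSW S color B (color p0) hcc p (Finset.mem_coe.mp hpS) hp1 hp2 hpc hpmin
          _ p0 hp0S hp0cr (hp1.trans h01) h02 (hp2.trans h03) h04 rfl
      exact noPart r hrS hrcr hrpart
  cases hb : color p0 with
  | true => exact Or.inl (hb ▸ hsafe)
  | false => exact Or.inr (hb ▸ hsafe)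
end
end
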